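/- arXiv:2311.15611 — 8 statements merged into one kernel-verified Lean document; each statement's English description precedes it below -/
import Mathlib

section
/- Let f = a_0 + a_1 z + ... + a_m z^m be a polynomial with integer coefficients, m ≥ 2, a_0 a_m ≠ 0, f primitive, and suppose |a_{m-1}| > 1 + |a_0||a_m|^{m-1} + |a_1||a_m|^{m-2} + ... + |a_{m-2}||a_m|. Then f is irreducible in ℤ[z]. -/
open Polynomial Finset

noncomputable def Complex.abs : AbsoluteValue ℂ ℝ :=
  IsAbsoluteValue.toAbsoluteValue (norm : ℂ → ℝ)

lemma Complex.abs_intCast (n : ℤ) : Complex.abs (n : ℂ) = |(n : ℝ)| := by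
  show ‖(n : ℂ)‖ = |(n : ℝ)|
  rw [Complex.norm_intCast]

/-- Coefficients of an explicit sum polynomial. -/
lemma aux_coeff_sum {R : Type*} [CommRing R] (n : ℕ) (c : ℕ → R) (j : ℕ) :
    (∑ i ∈ range (n + 1), C (c i) * X ^ i).coeff j = if j ≤ n then c j else 0 := by
  rw [finset_sum_coeff]
  simp only [coeff_C_mul, coeff_X_pow, mul_ite, mul_one, mul_zero]
  rw [Finset.sum_ite_eq (range (n+1)) j c]
  simp [Nat.lt_succ_iff]

lemma aux_natDegree_sum {R : Type*} [CommRing R] (n : ℕ) (c : ℕ → R) (hc : c n ≠ 0) :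
    (∑ i ∈ range (n + 1), C (c i) * X ^ i).natDegree = n := by
  apply le_antisymm
  · rw [natDegree_le_iff_coeff_eq_zero]
    intro N hN
    rw [aux_coeff_sum]
    simp [Nat.not_le.mpr hN]
  · apply le_natDegree_of_ne_zero
    rw [aux_coeff_sum]
    simpa using hc

/-- A multiset of nonnegative reals all `< c ≤ 1` (nonempty) has product `< c`. -/
lemma aux_multiset_prod_lt (s : Multiset ℝ) (c : ℝ) (hc : 0 < c) (hc1 : c ≤ 1)
    (hne : s ≠ 0) (h : ∀ x ∈ s, 0 ≤ x ∧ x < c) : s.prod < c := by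
  induction s using Multiset.induction with
  | empty => exact absurd rfl hne
  | cons a s ih =>
    rcases eq_or_ne s 0 with rfl | hs
    · simpa using (h a (by simp)).2
    · have hprod := ih hs (fun x hx => h x (Multiset.mem_cons_of_mem hx))
      have ha := h a (Multiset.mem_cons_self a s)
      have hsnn : 0 ≤ s.prod := Multiset.prod_nonneg (fun x hx => (h x (Multiset.mem_cons_of_mem hx)).1)
      rw [Multiset.prod_cons]
      nlinarith [ha.1, ha.2]

lemma aux_key (k : ℕ) (U V : ℂ) (p b : ℕ → ℂ)
    (hU : 1 ≤ Complex.abs U) (hV : 1 ≤ Complex.abs V)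
    (hpm : p (k + 1) = 1)
    (hb0 : b 0 = -(U * p 0))
    (hbi : ∀ i, b (i + 1) = p i - U * p (i + 1))
    (heval : ∑ j ∈ range (k + 2), p j * V ^ j = 0)
    (hineq : 1 + ∑ i ∈ range (k + 1), Complex.abs (b i) < Complex.abs (b (k + 1))) :
    False := by
  set T : ℝ := ∑ j ∈ range (k + 1), Complex.abs (p j) with hT
  set S : ℝ := ∑ i ∈ range (k + 1), Complex.abs (b i) with hS
  have hVpos : (0:ℝ) < Complex.abs V := lt_of_lt_of_le one_pos hV
  -- Step A : Complex.abs V ≤ T, hence 1 ≤ T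
  have h1 : V ^ (k + 1) = -∑ j ∈ range (k + 1), p j * V ^ j := by
    rw [Finset.sum_range_succ, hpm, one_mul] at heval
    linear_combination heval
  have hTV : Complex.abs V ≤ T := by
    have h2 : Complex.abs V * Complex.abs V ^ k ≤ T * Complex.abs V ^ k := by
      calc Complex.abs V * Complex.abs V ^ k
          = Complex.abs (V ^ (k + 1)) := by rw [map_pow, pow_succ]; ring
        _ = Complex.abs (∑ j ∈ range (k + 1), p j * V ^ j) := by rw [h1, Complex.abs.map_neg]
        _ ≤ ∑ j ∈ range (k + 1), Complex.abs (p j * V ^ j) :=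
            AbsoluteValue.sum_le _ _ _
        _ ≤ ∑ j ∈ range (k + 1), Complex.abs (p j) * Complex.abs V ^ k := by
            apply Finset.sum_le_sum
            intro j hj
            rw [map_mul, map_pow]
            exact mul_le_mul_of_nonneg_left
              (pow_le_pow_right₀ hV (Nat.lt_succ_iff.mp (Finset.mem_range.mp hj)))
              (AbsoluteValue.nonneg _ _)
        _ = T * Complex.abs V ^ k := by rw [← Finset.sum_mul]
    exact le_of_mul_le_mul_right h2 (pow_pos hVpos k)
  have hT1 : (1:ℝ) ≤ T := le_trans hV hTV
  -- Step B : (|U| - 1) * T + |p k| ≤ S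
  have hb0' : Complex.abs (b 0) = Complex.abs U * Complex.abs (p 0) := by
    rw [hb0, Complex.abs.map_neg, map_mul]
  have hterm : ∀ i, Complex.abs U * Complex.abs (p (i + 1)) - Complex.abs (p i)
      ≤ Complex.abs (b (i + 1)) := by
    intro i
    have h3 : Complex.abs (U * p (i + 1)) ≤ Complex.abs (b (i + 1)) + Complex.abs (p i) := by
      have : U * p (i + 1) = -(b (i + 1)) + p i := by rw [hbi]; ring
      rw [this]
      calc Complex.abs (-(b (i+1)) + p i) ≤ Complex.abs (-(b (i+1))) + Complex.abs (p i) :=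
            AbsoluteValue.add_le _ _ _
        _ = Complex.abs (b (i+1)) + Complex.abs (p i) := by rw [Complex.abs.map_neg]
    rw [map_mul] at h3
    linarith
  have hsplitS : S = Complex.abs (b 0) + ∑ i ∈ range k, Complex.abs (b (i + 1)) := by
    rw [hS, Finset.sum_range_succ']; ring
  have hsplitT0 : T = Complex.abs (p 0) + ∑ i ∈ range k, Complex.abs (p (i + 1)) := by
    rw [hT, Finset.sum_range_succ']; ring
  have hsplitT1 : T = (∑ i ∈ range k, Complex.abs (p i)) + Complex.abs (p k) := by
    rw [hT, Finset.sum_range_succ]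
  have hsum : (∑ i ∈ range k, (Complex.abs U * Complex.abs (p (i + 1)) - Complex.abs (p i)))
      ≤ ∑ i ∈ range k, Complex.abs (b (i + 1)) :=
    Finset.sum_le_sum (fun i _ => hterm i)
  have hsum' : (∑ i ∈ range k, (Complex.abs U * Complex.abs (p (i + 1)) - Complex.abs (p i)))
      = Complex.abs U * (∑ i ∈ range k, Complex.abs (p (i + 1)))
        - ∑ i ∈ range k, Complex.abs (p i) := by
    rw [Finset.sum_sub_distrib, Finset.mul_sum]
  have hB : (Complex.abs U - 1) * T + Complex.abs (p k) ≤ S := by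
    nlinarith [hsum, hsum', hsplitS, hsplitT0, hsplitT1, hb0']
  -- Step C
  have hC : Complex.abs (b (k + 1)) ≤ Complex.abs (p k) + Complex.abs U := by
    rw [hbi, hpm, mul_one]
    calc Complex.abs (p k - U) ≤ Complex.abs (p k) + Complex.abs (-U) := by
          rw [sub_eq_add_neg]; exact AbsoluteValue.add_le _ _ _
      _ = Complex.abs (p k) + Complex.abs U := by rw [Complex.abs.map_neg]
  nlinarith [hineq, hB, hC, hT1, hU]

lemma aux_bridge (k : ℕ) (U V : ℂ) (F : ℂ[X])
    (hd : F.natDegree = k + 2) (hmo : F.Monic)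
    (hdvd : (X - C U) * (X - C V) ∣ F)
    (hU : 1 ≤ Complex.abs U) (hV : 1 ≤ Complex.abs V)
    (hineq : 1 + ∑ i ∈ range (k + 1), Complex.abs (F.coeff i) < Complex.abs (F.coeff (k + 1))) :
    False := by
  obtain ⟨Q, hFQ⟩ := hdvd
  rw [mul_assoc] at hFQ
  set P : ℂ[X] := (X - C V) * Q with hP
  have hmoF : ((X - C U) * P).Monic := hFQ ▸ hmo
  have hPmonic : P.Monic := (monic_X_sub_C U).of_mul_monic_left hmoF
  have hdP : P.natDegree = k + 1 := by
    have h1 : ((X - C U) * P).natDegree = (X - C U).natDegree + P.natDegree :=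
      (monic_X_sub_C U).natDegree_mul hPmonic
    rw [← hFQ, hd, natDegree_X_sub_C] at h1
    omega
  have hpm : P.coeff (k + 1) = 1 := by
    have := hPmonic.coeff_natDegree
    rwa [hdP] at this
  have hF2 : F = X * P - C U * P := by rw [hFQ]; ring
  have hb0 : F.coeff 0 = -(U * P.coeff 0) := by
    rw [hF2, coeff_sub, coeff_X_mul_zero, coeff_C_mul]; ring
  have hbi : ∀ i, F.coeff (i + 1) = P.coeff i - U * P.coeff (i + 1) := by
    intro i
    rw [hF2, coeff_sub, coeff_X_mul, coeff_C_mul]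
  have hevalP : P.eval V = 0 := by
    have : (X - C V) ∣ P := dvd_mul_right _ _
    exact (dvd_iff_isRoot.mp this)
  have heval : ∑ j ∈ range (k + 2), P.coeff j * V ^ j = 0 := by
    have h2 := eval_eq_sum_range (p := P) V
    rw [hdP] at h2
    rw [← h2, hevalP]
  exact aux_key k U V P.coeff F.coeff hU hV hpm hb0 hbi heval hineq

lemma aux_big_root (g : ℤ[X]) (A : ℤ) (hg : 1 ≤ g.natDegree)
    (h0 : g.coeff 0 ≠ 0) (hlead : g.leadingCoeff ∣ A) (hA : A ≠ 0) :
    ∃ u : ℂ, (g.map (Int.castRingHom ℂ)).IsRoot u ∧ 1 ≤ (|A| : ℝ) * Complex.abs u := by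
  set G : ℂ[X] := g.map (Int.castRingHom ℂ) with hG
  have hg0 : g ≠ 0 := fun h => h0 (by simp [h])
  have hGdeg : G.natDegree = g.natDegree :=
    natDegree_map_eq_of_injective (by { intro x y h; simpa using h }) g
  have hG0 : G.coeff 0 = (g.coeff 0 : ℂ) := by rw [hG, coeff_map]; rfl
  have hGne : G ≠ 0 := by
    intro h
    rw [h, coeff_zero] at hG0
    exact h0 (by exact_mod_cast hG0.symm)
  have hsplits : G.Splits := IsAlgClosed.splits G
  have hprod : G = C G.leadingCoeff * (G.roots.map fun a => X - C a).prod :=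
    hsplits.eq_prod_roots
  have hcard : G.roots.card = G.natDegree := (splits_iff_card_roots.mp hsplits)
  set s : Multiset ℝ := G.roots.map Complex.abs with hs
  have heval : Complex.abs (G.eval 0) = Complex.abs G.leadingCoeff * s.prod := by
    conv_lhs => rw [hprod]
    rw [eval_mul, eval_C, map_mul, eval_multiset_prod, Multiset.map_map]
    congr 1
    have e1 : (Multiset.map (eval 0 ∘ fun a => X - C a) G.roots)
        = G.roots.map (fun a => -a) := Multiset.map_congr rfl (by intro x _; simp)
    rw [e1, map_multiset_prod Complex.abs, Multiset.map_map]
    congr 1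
    apply Multiset.map_congr rfl
    intro x _
    simp only [Function.comp_apply, Complex.abs.map_neg]
  have habs1 : (1:ℝ) ≤ Complex.abs (G.eval 0) := by
    rw [← coeff_zero_eq_eval_zero, hG0, Complex.abs_intCast]
    exact_mod_cast Int.one_le_abs h0
  by_contra hcon
  push_neg at hcon
  set c : ℝ := (|A| : ℝ)⁻¹ with hc
  have hA1 : (1:ℝ) ≤ (|A| : ℝ) := by exact_mod_cast Int.one_le_abs hA
  have hcpos : 0 < c := inv_pos.mpr (lt_of_lt_of_le one_pos hA1)
  have hc1 : c ≤ 1 := inv_le_one_of_one_le₀ hA1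
  have hsne : s ≠ 0 := by
    intro h
    have : s.card = 0 := by rw [h]; rfl
    rw [hs, Multiset.card_map, hcard, hGdeg] at this
    omega
  have hall : ∀ x ∈ s, 0 ≤ x ∧ x < c := by
    intro x hx
    rw [hs] at hx
    obtain ⟨u, hu, rfl⟩ := Multiset.mem_map.mp hx
    have hroot : G.IsRoot u := isRoot_of_mem_roots hu
    have := hcon u hroot
    constructor
    · exact AbsoluteValue.nonneg _ _
    · have hApos : (0:ℝ) < (|A| : ℝ) := lt_of_lt_of_le one_pos hA1
      rw [hc, ← one_div]
      rw [lt_div_iff₀ hApos]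
      calc Complex.abs u * (|A| : ℝ) = (|A| : ℝ) * Complex.abs u := mul_comm _ _
        _ < 1 := this
  have hprodlt : s.prod < c := aux_multiset_prod_lt s c hcpos hc1 hsne hall
  have hleadeq : G.leadingCoeff = (g.leadingCoeff : ℂ) := by
    rw [leadingCoeff, hGdeg, hG, coeff_map, leadingCoeff]; rfl
  have hleadle : Complex.abs G.leadingCoeff ≤ (|A| : ℝ) := by
    rw [hleadeq, Complex.abs_intCast]
    have h1 : |g.leadingCoeff| ∣ |A| := (abs_dvd _ _).mpr ((dvd_abs _ _).mpr hlead)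
    exact_mod_cast Int.le_of_dvd (abs_pos.mpr hA) h1
  have hleadpos : 0 < Complex.abs G.leadingCoeff :=
    AbsoluteValue.pos _ (leadingCoeff_ne_zero.mpr hGne)
  have hsnn : 0 ≤ s.prod :=
    Multiset.prod_nonneg (by
      intro x hx
      obtain ⟨u, _, rfl⟩ := Multiset.mem_map.mp hx
      exact AbsoluteValue.nonneg _ _)
  have hfin : Complex.abs (G.eval 0) < 1 := by
    rw [heval]
    calc Complex.abs G.leadingCoeff * s.prod
        < Complex.abs G.leadingCoeff * c := by
          exact mul_lt_mul_of_pos_left hprodlt hleadpos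
      _ ≤ (|A| : ℝ) * c := mul_le_mul_of_nonneg_right hleadle (le_of_lt hcpos)
      _ = 1 := by
          rw [hc]
          field_simp
  linarith

/-- Non-monic extension of Perron's irreducibility criterion (Theorem B). -/
theorem stmt0 (m : ℕ) (hm : 2 ≤ m) (a : ℕ → ℤ) (f : ℤ[X])
    (hf : f = ∑ i ∈ range (m + 1), C (a i) * X ^ i)
    (ha : a 0 * a m ≠ 0) (hprim : f.IsPrimitive)
    (hineq : |a (m - 1)| > 1 + ∑ i ∈ range (m - 1), |a i| * |a m| ^ (m - 1 - i)) :
    Irreducible f := by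
  obtain ⟨k, rfl⟩ : ∃ k, m = k + 2 := ⟨m - 2, by omega⟩
  have ha0 : a 0 ≠ 0 := left_ne_zero_of_mul ha
  have ham : a (k + 2) ≠ 0 := right_ne_zero_of_mul ha
  have hco : ∀ j, f.coeff j = if j ≤ k + 2 then a j else 0 := fun j => by
    rw [hf]; exact aux_coeff_sum (k + 2) a j
  have hdf : f.natDegree = k + 2 := by rw [hf]; exact aux_natDegree_sum (k + 2) a ham
  have hfne : f ≠ 0 := fun h => by
    have := hco (k + 2)
    rw [h] at this
    simp at this
    exact ham this.symm
  constructor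
  · exact not_isUnit_of_natDegree_pos f (by rw [hdf]; omega)
  intro g h hfgh
  by_contra hcon
  push_neg at hcon
  obtain ⟨hgu, hhu⟩ := hcon
  have hgne : g ≠ 0 := by rintro rfl; rw [zero_mul] at hfgh; exact hfne hfgh
  have hhne : h ≠ 0 := by rintro rfl; rw [mul_zero] at hfgh; exact hfne hfgh
  have hgdeg : 1 ≤ g.natDegree := by
    by_contra hgd
    push_neg at hgd
    have hg0 : g.natDegree = 0 := by omega
    have hgC : g = C (g.coeff 0) := eq_C_of_natDegree_eq_zero hg0
    have : IsUnit (g.coeff 0) := hprim (g.coeff 0) ⟨h, by rw [← hgC, ← hfgh]⟩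
    exact hgu (hgC ▸ (isUnit_C.mpr this))
  have hhdeg : 1 ≤ h.natDegree := by
    by_contra hhd
    push_neg at hhd
    have hh0 : h.natDegree = 0 := by omega
    have hhC : h = C (h.coeff 0) := eq_C_of_natDegree_eq_zero hh0
    have : IsUnit (h.coeff 0) := hprim (h.coeff 0) ⟨g, by rw [mul_comm, ← hhC, ← hfgh]⟩
    exact hhu (hhC ▸ (isUnit_C.mpr this))
  have hc0 : g.coeff 0 * h.coeff 0 = a 0 := by
    have h1 : f.coeff 0 = a 0 := by rw [hco]; simp
    rw [hfgh, mul_coeff_zero] at h1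
    exact h1
  have hg00 : g.coeff 0 ≠ 0 := fun hz => ha0 (by rw [← hc0, hz, zero_mul])
  have hh00 : h.coeff 0 ≠ 0 := fun hz => ha0 (by rw [← hc0, hz, mul_zero])
  have hleadf : g.leadingCoeff * h.leadingCoeff = a (k + 2) := by
    have h1 : f.leadingCoeff = a (k + 2) := by
      rw [leadingCoeff, hdf, hco]; simp
    rw [hfgh, leadingCoeff_mul] at h1
    exact h1
  obtain ⟨u, hu, hUabs⟩ := aux_big_root g (a (k + 2)) hgdeg hg00
    ⟨h.leadingCoeff, hleadf.symm⟩ ham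
  obtain ⟨v, hv, hVabs⟩ := aux_big_root h (a (k + 2)) hhdeg hh00
    ⟨g.leadingCoeff, by rw [← hleadf]; ring⟩ ham
  set am : ℂ := ((a (k + 2) : ℤ) : ℂ) with ham'
  have hamne : am ≠ 0 := by
    rw [ham']; exact_mod_cast ham
  set sC : ℂ[X] := C am⁻¹ * X with hsC
  set fC : ℂ[X] := f.map (Int.castRingHom ℂ) with hfC
  set F : ℂ[X] := C (am ^ (k + 1)) * fC.comp sC with hF
  set c : ℕ → ℂ := fun i => (a i : ℂ) * am ^ (k + 1) * (am⁻¹) ^ i with hc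
  have hFsum : F = ∑ i ∈ range (k + 2 + 1), C (c i) * X ^ i := by
    rw [hF, hfC, hf, Polynomial.map_sum]
    simp only [Polynomial.map_mul, Polynomial.map_pow, map_C, map_X]
    rw [Polynomial.sum_comp, Finset.mul_sum]
    apply Finset.sum_congr rfl
    intro i _
    rw [mul_comp, C_comp, pow_comp, X_comp, hsC, hc]
    simp only [mul_pow, C_mul, C_pow, eq_intCast]
    ring
  have hcm : c (k + 2) = 1 := by
    rw [hc]
    show ((a (k + 2) : ℤ) : ℂ) * am ^ (k + 1) * (am⁻¹) ^ (k + 2) = 1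
    rw [← ham', ← pow_succ', inv_pow, mul_inv_cancel₀ (pow_ne_zero _ hamne)]
  have hFdeg : F.natDegree = k + 2 := by
    rw [hFsum]; exact aux_natDegree_sum _ c (by rw [hcm]; exact one_ne_zero)
  have hFco : ∀ j, F.coeff j = if j ≤ k + 2 then c j else 0 := fun j => by
    rw [hFsum]; exact aux_coeff_sum _ c j
  have hFmon : F.Monic := monic_of_natDegree_le_of_coeff_eq_one (k + 2)
    (le_of_eq hFdeg) (by rw [hFco]; simp [hcm])
  have hgdvd : (X - C u) ∣ g.map (Int.castRingHom ℂ) := dvd_iff_isRoot.mpr hu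
  have hhdvd : (X - C v) ∣ h.map (Int.castRingHom ℂ) := dvd_iff_isRoot.mpr hv
  have hfCdvd : (X - C u) * (X - C v) ∣ fC := by
    rw [hfC, hfgh, Polynomial.map_mul]; exact mul_dvd_mul hgdvd hhdvd
  obtain ⟨r, hr⟩ := hfCdvd
  set U : ℂ := am * u with hU'
  set V : ℂ := am * v with hV'
  have e1 : (X - C u).comp sC = C am⁻¹ * (X - C U) := by
    rw [sub_comp, X_comp, C_comp, hU', mul_sub, ← C_mul, inv_mul_cancel_left₀ hamne]
  have e2 : (X - C v).comp sC = C am⁻¹ * (X - C V) := by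
    rw [sub_comp, X_comp, C_comp, hV', mul_sub, ← C_mul, inv_mul_cancel_left₀ hamne]
  have hdvdF : (X - C U) * (X - C V) ∣ F := by
    refine ⟨C (am ^ (k + 1) * am⁻¹ * am⁻¹) * r.comp sC, ?_⟩
    rw [hF, hr, mul_comp, mul_comp, e1, e2]
    simp only [C_mul]
    ring
  have habsam : Complex.abs am = ((|a (k + 2)| : ℤ) : ℝ) := by
    rw [ham', Complex.abs_intCast]; norm_cast
  have hUabs' : 1 ≤ Complex.abs U := by
    rw [hU', map_mul, habsam]; exact_mod_cast hUabs
  have hVabs' : 1 ≤ Complex.abs V := by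
    rw [hV', map_mul, habsam]; exact_mod_cast hVabs
  -- transfer the inequality
  have habsc : ∀ i, i ≤ k + 1 →
      Complex.abs (c i) = |(a i : ℝ)| * |(a (k + 2) : ℝ)| ^ (k + 1 - i) := by
    intro i hi
    rw [hc]
    show Complex.abs ((a i : ℂ) * am ^ (k + 1) * (am⁻¹) ^ i) = _
    rw [map_mul, map_mul, map_pow, map_pow, map_inv₀, Complex.abs_intCast]
    have h2 : Complex.abs am = |(a (k + 2) : ℝ)| := by
      rw [ham', Complex.abs_intCast]
    rw [h2]
    set A : ℝ := |(a (k + 2) : ℝ)| with hA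
    have hApos : (0:ℝ) < A := by
      rw [hA]; exact abs_pos.mpr (by exact_mod_cast ham)
    have h3 : A ^ (k + 1) * (A⁻¹) ^ i = A ^ (k + 1 - i) := by
      rw [inv_pow]
      rw [eq_comm, eq_mul_inv_iff_mul_eq₀ (pow_ne_zero _ (ne_of_gt hApos)), ← pow_add]
      congr 1
      omega
    rw [mul_assoc, h3]
  have hineqF : 1 + ∑ i ∈ range (k + 1), Complex.abs (F.coeff i)
      < Complex.abs (F.coeff (k + 1)) := by
    have hcast : (1:ℝ) + ∑ i ∈ range (k + 1), |(a i : ℝ)| * |(a (k + 2) : ℝ)| ^ (k + 1 - i)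
        < |(a (k + 1) : ℝ)| := by
      exact_mod_cast hineq
    have hsum : ∑ i ∈ range (k + 1), Complex.abs (F.coeff i)
        = ∑ i ∈ range (k + 1), |(a i : ℝ)| * |(a (k + 2) : ℝ)| ^ (k + 1 - i) := by
      apply Finset.sum_congr rfl
      intro i hi
      have hi' : i ≤ k + 1 := by
        have := Finset.mem_range.mp hi; omega
      rw [hFco i, if_pos (by omega : i ≤ k + 2), habsc i hi']
    have hlast : Complex.abs (F.coeff (k + 1)) = |(a (k + 1) : ℝ)| := by
      rw [hFco, if_pos (by omega : k + 1 ≤ k + 2), habsc (k + 1) le_rfl]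
      simp
    rw [hsum, hlast]
    exact hcast
  exact aux_bridge k U V F hFdeg hFmon hdvdF hUabs' hVabs' hineqF
end

section
/- Let f = a_0 + a_1 z + ... + a_m z^m ∈ ℤ[z], and suppose there exist a prime p and coprime positive integers k and j with 1 ≤ j ≤ m such that p does not divide a_j, p^k divides a_i for all i = 0, ..., j−1, and p^{k+1} does not divide a_0. Then any factorization f = g·h in ℤ[z] has a factor of degree at most k_0, where k_0 ∈ {0, m−j}. -/
open Polynomial Finset

theorem le_e_sum (p : ℕ) {β : Type*} (s : Finset β) (F : β → ℤ) (t : ℕ∞)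
    (h : ∀ x ∈ s, t ≤ emultiplicity (p:ℤ) (F x)) :
    t ≤ emultiplicity (p:ℤ) (∑ x ∈ s, F x) := by
  classical
  induction s using Finset.induction with
  | empty => simp [emultiplicity_zero]
  | insert _ _ hx ih =>
    rw [Finset.sum_insert hx]
    exact le_trans (le_min (h _ (mem_insert_self _ _))
      (ih fun x hxs => h x (mem_insert_of_mem hxs))) min_le_emultiplicity_add

noncomputable def dd (p j k : ℕ) (q : ℤ[X]) (i : ℕ) : ℕ∞ :=
  (j:ℕ∞) * emultiplicity (p:ℤ) (q.coeff i) + (k*i : ℕ)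

theorem dd_top (p j k : ℕ) (hj : 0 < j) (q : ℤ[X]) (i : ℕ) (hc : q.coeff i = 0) :
    dd p j k q i = ⊤ := by
  rw [dd, hc, emultiplicity_zero]
  rw [ENat.mul_top (by exact_mod_cast hj.ne' : (j:ℕ∞) ≠ 0)]
  rfl

theorem dd_ne_top (p j k : ℕ) (hp : p.Prime) (q : ℤ[X]) (i : ℕ) (hc : q.coeff i ≠ 0) :
    dd p j k q i ≠ ⊤ := by
  have hfin : FiniteMultiplicity (p:ℤ) (q.coeff i) := by
    rw [Int.finiteMultiplicity_iff]
    exact ⟨by simpa using hp.ne_one, hc⟩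
  have heq : dd p j k q i = ((j * multiplicity (p:ℤ) (q.coeff i) + k*i : ℕ) : ℕ∞) := by
    rw [dd, hfin.emultiplicity_eq_multiplicity]; push_cast; ring
  rw [heq]
  exact ENat.coe_ne_top _

theorem dd_add_dd (p : ℕ) (hp : p.Prime) (j k : ℕ) (g h : ℤ[X]) (x1 x2 n : ℕ)
    (hx : x1 + x2 = n) :
    dd p j k g x1 + dd p j k h x2
      = (j:ℕ∞) * emultiplicity (p:ℤ) (g.coeff x1 * h.coeff x2) + (k*n : ℕ) := by
  have hprime : Prime (p:ℤ) := Nat.prime_iff_prime_int.mp hp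
  rw [emultiplicity_mul hprime, dd, dd, ← hx]
  push_cast
  ring

theorem enat_lt_coe (W : ℕ) (x : ℕ∞) : (W:ℕ∞) < x ↔ ((W+1:ℕ):ℕ∞) ≤ x := by
  rw [← ENat.add_one_le_iff (by simp : (W:ℕ∞) ≠ ⊤)]
  push_cast
  rfl

theorem dd_mul_ge (p : ℕ) (hp : p.Prime) (j k : ℕ) (g h : ℤ[X]) (n : ℕ) (B : ℕ∞)
    (hB : ∀ x1 x2, x1 + x2 = n → B ≤ dd p j k g x1 + dd p j k h x2) :
    B ≤ dd p j k (g*h) n := by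
  classical
  have hne : (antidiagonal n).Nonempty := ⟨(0,n), by simp⟩
  obtain ⟨xs, hxsmem, hxs⟩ := Finset.exists_mem_eq_inf' hne
    (fun x => emultiplicity (p:ℤ) (g.coeff x.1 * h.coeff x.2))
  have h1 : (Finset.inf' _ hne fun x => emultiplicity (p:ℤ) (g.coeff x.1 * h.coeff x.2))
      ≤ emultiplicity (p:ℤ) ((g*h).coeff n) := by
    rw [Polynomial.coeff_mul]
    exact le_e_sum p _ _ _ (fun x hx => Finset.inf'_le _ hx)
  calc B ≤ dd p j k g xs.1 + dd p j k h xs.2 := hB _ _ (Finset.HasAntidiagonal.mem_antidiagonal.mp hxsmem)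
    _ = (j:ℕ∞) * emultiplicity (p:ℤ) (g.coeff xs.1 * h.coeff xs.2) + (k*n : ℕ) :=
        dd_add_dd p hp j k g h _ _ n (Finset.HasAntidiagonal.mem_antidiagonal.mp hxsmem)
    _ ≤ dd p j k (g*h) n := by
        rw [dd]
        exact add_le_add_left (mul_le_mul_right (hxs ▸ h1) _) _

theorem dd_mul_exact (p : ℕ) (hp : p.Prime) (j k : ℕ) (hj : 0 < j) (g h : ℤ[X])
    (W1 W2 : ℕ) (i0 u0 : ℕ)
    (hg1 : ∀ i, (W1:ℕ∞) ≤ dd p j k g i) (hg2 : dd p j k g i0 = W1)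
    (hh1 : ∀ i, (W2:ℕ∞) ≤ dd p j k h i) (hh2 : dd p j k h u0 = W2)
    (hsplit : ∀ x1 x2, x1 + x2 = i0 + u0 → ¬(x1 = i0 ∧ x2 = u0) →
      (W1:ℕ∞) < dd p j k g x1 ∨ (W2:ℕ∞) < dd p j k h x2) :
    dd p j k (g*h) (i0+u0) = ((W1+W2 : ℕ) : ℕ∞) := by
  classical
  set n := i0 + u0 with hn
  -- finiteness of the two key emultiplicities
  have hjtop : (j:ℕ∞) * (⊤:ℕ∞) = ⊤ := by
    simp [ENat.mul_top, (by exact_mod_cast hj.ne' : (j:ℕ∞) ≠ 0)]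
  obtain ⟨α, hα⟩ : ∃ α : ℕ, emultiplicity (p:ℤ) (g.coeff i0) = α := by
    cases hc : emultiplicity (p:ℤ) (g.coeff i0) with
    | top => rw [dd, hc, hjtop] at hg2; simp at hg2
    | coe α => exact ⟨α, rfl⟩
  obtain ⟨β, hβ⟩ : ∃ β : ℕ, emultiplicity (p:ℤ) (h.coeff u0) = β := by
    cases hc : emultiplicity (p:ℤ) (h.coeff u0) with
    | top => rw [dd, hc, hjtop] at hh2; simp at hh2
    | coe β => exact ⟨β, rfl⟩
  -- nat equations
  have hW1 : j * α + k * i0 = W1 := by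
    have := hg2; rw [dd, hα] at this; exact_mod_cast this
  have hW2 : j * β + k * u0 = W2 := by
    have := hh2; rw [dd, hβ] at this; exact_mod_cast this
  have hWsum : W1 + W2 = j * (α + β) + k * n := by rw [hn, ← hW1, ← hW2]; ring
  have hprime : Prime (p:ℤ) := Nat.prime_iff_prime_int.mp hp
  have hmem : (i0,u0) ∈ antidiagonal n := by simp [hn]
  have hcoeff : (g*h).coeff n = g.coeff i0 * h.coeff u0 +
      ∑ x ∈ (antidiagonal n).erase (i0,u0), g.coeff x.1 * h.coeff x.2 := by
    rw [Polynomial.coeff_mul, ← Finset.add_sum_erase _ _ hmem]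
  have hrest : ((α+β+1:ℕ) : ℕ∞) ≤ emultiplicity (p:ℤ)
      (∑ x ∈ (antidiagonal n).erase (i0,u0), g.coeff x.1 * h.coeff x.2) := by
    apply le_e_sum
    intro x hx
    have hxa := Finset.HasAntidiagonal.mem_antidiagonal.mp (Finset.mem_of_mem_erase hx)
    have hxne : ¬(x.1 = i0 ∧ x.2 = u0) := by
      rintro ⟨h1, h2⟩
      exact (Finset.ne_of_mem_erase hx) (Prod.ext h1 h2)
    have hdx : ((W1+W2+1:ℕ):ℕ∞) ≤ dd p j k g x.1 + dd p j k h x.2 := by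
      rcases hsplit x.1 x.2 hxa hxne with hlt | hlt
      · calc ((W1+W2+1:ℕ):ℕ∞) = ((W1+1:ℕ):ℕ∞) + ((W2:ℕ):ℕ∞) := by push_cast; ring
          _ ≤ _ := add_le_add ((enat_lt_coe _ _).mp hlt) (hh1 _)
      · calc ((W1+W2+1:ℕ):ℕ∞) = ((W1:ℕ):ℕ∞) + ((W2+1:ℕ):ℕ∞) := by push_cast; ring
          _ ≤ _ := add_le_add (hg1 _) ((enat_lt_coe _ _).mp hlt)
    rw [dd_add_dd p hp j k g h _ _ n hxa] at hdx
    by_contra hcon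
    push_neg at hcon
    have hcon2 : emultiplicity (p:ℤ) (g.coeff x.1 * h.coeff x.2) ≤ ((α+β:ℕ):ℕ∞) := by
      apply (ENat.lt_add_one_iff (by simp [← Nat.cast_add] : ((α+β:ℕ):ℕ∞) ≠ ⊤)).mp
      calc emultiplicity (p:ℤ) (g.coeff x.1 * h.coeff x.2) < ((α+β+1:ℕ):ℕ∞) := hcon
        _ = ((α+β:ℕ):ℕ∞) + 1 := by push_cast; ring
    have hle' : (j:ℕ∞) * emultiplicity (p:ℤ) (g.coeff x.1 * h.coeff x.2) + ((k*n:ℕ):ℕ∞)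
        ≤ ((W1+W2:ℕ):ℕ∞) := by
      calc (j:ℕ∞) * emultiplicity (p:ℤ) (g.coeff x.1 * h.coeff x.2) + ((k*n:ℕ):ℕ∞)
          ≤ (j:ℕ∞) * ((α+β:ℕ):ℕ∞) + ((k*n:ℕ):ℕ∞) :=
            add_le_add_left (mul_le_mul_right hcon2 _) _
        _ = ((j*(α+β)+k*n:ℕ):ℕ∞) := by push_cast; ring
        _ = ((W1+W2:ℕ):ℕ∞) := by rw [← hWsum]
    have : ((W1+W2+1:ℕ):ℕ∞) ≤ ((W1+W2:ℕ):ℕ∞) := hdx.trans hle'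
    have : W1+W2+1 ≤ W1+W2 := by exact_mod_cast this
    omega
  have hMrest : emultiplicity (p:ℤ) ((g*h).coeff n) = ((α+β:ℕ):ℕ∞) := by
    rw [hcoeff, add_comm]
    rw [emultiplicity_add_of_gt ?hgt]
    case hgt =>
      rw [emultiplicity_mul hprime, hα, hβ]
      calc ((α:ℕ∞)) + (β:ℕ∞) = ((α+β:ℕ):ℕ∞) := by push_cast; ring
        _ < ((α+β+1:ℕ):ℕ∞) := by exact_mod_cast Nat.lt_succ_self _
        _ ≤ _ := hrest
    rw [emultiplicity_mul hprime, hα, hβ]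
    push_cast; ring
  rw [dd, hMrest]
  calc (j:ℕ∞) * ((α+β:ℕ):ℕ∞) + ((k*n:ℕ):ℕ∞) = ((j*(α+β)+k*n:ℕ):ℕ∞) := by push_cast; ring
    _ = ((W1+W2:ℕ):ℕ∞) := by rw [← hWsum]

theorem exists_profile (p j k : ℕ) (hp : p.Prime) (hj : 0 < j) (q : ℤ[X]) (hq : q ≠ 0) :
    ∃ (W i0 i1 : ℕ), i0 ≤ i1 ∧ i1 ≤ q.natDegree ∧
      dd p j k q i0 = (W:ℕ∞) ∧ dd p j k q i1 = (W:ℕ∞) ∧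
      (∀ i, (W:ℕ∞) ≤ dd p j k q i) ∧
      (∀ i, i < i0 → (W:ℕ∞) < dd p j k q i) ∧
      (∀ i, i1 < i → (W:ℕ∞) < dd p j k q i) := by
  classical
  have hne : (range (q.natDegree + 1)).Nonempty := ⟨0, by simp⟩
  set Winf := Finset.inf' _ hne (dd p j k q) with hWinf
  obtain ⟨is, hismem, his⟩ := Finset.exists_mem_eq_inf' hne (dd p j k q)
  have hfin : Winf ≠ ⊤ := by
    intro htop
    have h1 : Winf ≤ dd p j k q q.natDegree :=
      Finset.inf'_le _ (by simp)
    rw [htop, top_le_iff] at h1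
    exact dd_ne_top p j k hp q q.natDegree (fun hc => hq (Polynomial.leadingCoeff_eq_zero.mp hc)) h1
  obtain ⟨W, hW⟩ : ∃ W : ℕ, Winf = (W:ℕ∞) := by
    cases hw : Winf with
    | top => exact absurd hw hfin
    | coe W => exact ⟨W, rfl⟩
  have hglobal : ∀ i, (W:ℕ∞) ≤ dd p j k q i := by
    intro i
    rcases le_or_gt i q.natDegree with hi | hi
    · rw [← hW]; exact Finset.inf'_le _ (by simp [Nat.lt_succ_iff, hi])
    · rw [dd_top p j k hj q i (Polynomial.coeff_eq_zero_of_natDegree_lt hi)]; exact le_top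
  have hisW : dd p j k q is = (W:ℕ∞) := by rw [← his]; exact hW
  have hisle : is ≤ q.natDegree := by simpa [Nat.lt_succ_iff] using hismem
  have hex : ∃ i, dd p j k q i = (W:ℕ∞) := ⟨is, hisW⟩
  set i0 := Nat.find hex with hi0
  set i1 := Nat.findGreatest (fun i => dd p j k q i = (W:ℕ∞)) q.natDegree with hi1
  have hdi1 : dd p j k q i1 = (W:ℕ∞) := Nat.findGreatest_spec (P := fun i => dd p j k q i = (W:ℕ∞)) hisle hisW
  have hi1le : i1 ≤ q.natDegree := Nat.findGreatest_le _
  refine ⟨W, i0, i1, ?_, hi1le, Nat.find_spec hex, hdi1, hglobal, ?_, ?_⟩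
  · exact le_trans (Nat.find_min' hex hisW) (Nat.le_findGreatest hisle hisW)
  · exact fun i hi => lt_of_le_of_ne (hglobal i) (fun he => Nat.find_min hex hi he.symm)
  · intro i hi
    rcases le_or_gt i q.natDegree with hle | hlt
    · exact lt_of_le_of_ne (hglobal i)
        (fun he => Nat.findGreatest_is_greatest hi hle he.symm)
    · rw [dd_top p j k hj q i (Polynomial.coeff_eq_zero_of_natDegree_lt hlt)]
      exact lt_of_le_of_ne le_top (by simp)

theorem dd_eq_nat (p j k : ℕ) (hj : 0 < j) (q : ℤ[X]) (i W : ℕ)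
    (hd : dd p j k q i = (W:ℕ∞)) :
    ∃ α : ℕ, j*α + k*i = W := by
  have hjtop : (j:ℕ∞) * (⊤:ℕ∞) = ⊤ := by
    simp [ENat.mul_top, (by exact_mod_cast hj.ne' : (j:ℕ∞) ≠ 0)]
  obtain ⟨α, hα⟩ : ∃ α : ℕ, emultiplicity (p:ℤ) (q.coeff i) = (α:ℕ∞) := by
    cases hc : emultiplicity (p:ℤ) (q.coeff i) with
    | top => rw [dd, hc, hjtop] at hd; simp at hd
    | coe α => exact ⟨α, rfl⟩
  refine ⟨α, ?_⟩
  rw [dd, hα] at hd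
  exact_mod_cast hd

/-- Theorem 1: a generalization of Eisenstein's criterion. Any factorization
`f = g * h` in `ℤ[z]` has a constant factor or a factor of degree at most `m - j`. -/
theorem stmt1 (m : ℕ) (a : ℕ → ℤ) (f : ℤ[X])
    (hf : f = ∑ i ∈ range (m + 1), C (a i) * X ^ i)
    (p : ℕ) (hp : p.Prime) (k j : ℕ) (hk : 1 ≤ k) (hj1 : 1 ≤ j) (hjm : j ≤ m)
    (hcop : Nat.Coprime k j)
    (hndvd : ¬ (p : ℤ) ∣ a j)
    (hdvd : ∀ i < j, (p : ℤ) ^ k ∣ a i)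
    (hndvd0 : ¬ (p : ℤ) ^ (k + 1) ∣ a 0)
    (g h : ℤ[X]) (hfac : f = g * h) :
    (g.natDegree = 0 ∨ h.natDegree = 0) ∨
      (g.natDegree ≤ m - j ∨ h.natDegree ≤ m - j) := by
  classical
  by_contra hcon
  push_neg at hcon
  obtain ⟨⟨hg0, hh0⟩, hgd, hhd⟩ := hcon
  have hj0 : 0 < j := hj1
  -- coefficients of f
  have hfc : ∀ n, n ≤ m → f.coeff n = a n := by
    intro n hn
    rw [hf, Polynomial.finset_sum_coeff]
    rw [Finset.sum_eq_single n]
    · simp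
    · intro b _ hbn
      simp [Polynomial.coeff_C_mul, Polynomial.coeff_X_pow, Ne.symm hbn]
    · intro hnot
      exact absurd (mem_range.mpr (Nat.lt_succ_of_le hn)) hnot
  have hdegf : f.natDegree ≤ m := by
    rw [hf]
    refine Polynomial.natDegree_sum_le_of_forall_le _ _ (fun i hi => ?_)
    refine le_trans (Polynomial.natDegree_C_mul_le _ _) ?_
    simpa [Polynomial.natDegree_X_pow] using Nat.lt_succ_iff.mp (mem_range.mp hi)
  have haj : a j ≠ 0 := fun h0 => hndvd (h0 ▸ dvd_zero _)
  have hfne : f ≠ 0 := fun h0 => haj (by rw [← hfc j hjm, h0, Polynomial.coeff_zero])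
  have hgne : g ≠ 0 := fun h0 => hfne (by rw [hfac, h0, zero_mul])
  have hhne : h ≠ 0 := fun h0 => hfne (by rw [hfac, h0, mul_zero])
  have hsum : g.natDegree + h.natDegree = f.natDegree := by
    rw [hfac]; exact (Polynomial.natDegree_mul hgne hhne).symm
  have hgj : g.natDegree < j := by omega
  have hhj : h.natDegree < j := by omega
  -- emultiplicity facts
  have e0 : emultiplicity (p:ℤ) (a 0) = (k:ℕ∞) := by
    have hle : (k:ℕ∞) ≤ emultiplicity (p:ℤ) (a 0) :=
      pow_dvd_iff_le_emultiplicity.mp (hdvd 0 hj1)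
    have hlt : emultiplicity (p:ℤ) (a 0) < ((k+1:ℕ):ℕ∞) :=
      emultiplicity_lt_iff_not_dvd.mpr hndvd0
    have hle2 : emultiplicity (p:ℤ) (a 0) ≤ (k:ℕ∞) := by
      apply (ENat.lt_add_one_iff (by simp : (k:ℕ∞) ≠ ⊤)).mp
      calc emultiplicity (p:ℤ) (a 0) < ((k+1:ℕ):ℕ∞) := hlt
        _ = (k:ℕ∞) + 1 := by push_cast; ring
    exact le_antisymm hle2 hle
  have ej : emultiplicity (p:ℤ) (a j) = (0:ℕ∞) := by
    have hlt : emultiplicity (p:ℤ) (a j) < ((1:ℕ):ℕ∞) :=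
      emultiplicity_lt_iff_not_dvd.mpr (by simpa using hndvd)
    have hle2 : emultiplicity (p:ℤ) (a j) ≤ ((0:ℕ):ℕ∞) := by
      apply (ENat.lt_add_one_iff (by simp : ((0:ℕ):ℕ∞) ≠ ⊤)).mp
      calc emultiplicity (p:ℤ) (a j) < ((1:ℕ):ℕ∞) := hlt
        _ = ((0:ℕ):ℕ∞) + 1 := by push_cast; ring
    simpa using hle2
  -- dd facts for f
  have hdd0 : dd p j k f 0 = ((j*k:ℕ):ℕ∞) := by
    rw [dd, hfc 0 (Nat.zero_le m), e0]; push_cast; ring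
  have hddj : dd p j k f j = ((j*k:ℕ):ℕ∞) := by
    rw [dd, hfc j hjm, ej]; push_cast; ring
  have hglobf : ∀ i, ((j*k:ℕ):ℕ∞) ≤ dd p j k f i := by
    intro i
    rcases lt_trichotomy i j with hij | rfl | hij
    · have hek : (k:ℕ∞) ≤ emultiplicity (p:ℤ) (f.coeff i) := by
        rw [hfc i (le_trans hij.le hjm)]
        exact pow_dvd_iff_le_emultiplicity.mp (hdvd i hij)
      calc ((j*k:ℕ):ℕ∞) = (j:ℕ∞) * (k:ℕ∞) := by push_cast; ring
        _ ≤ (j:ℕ∞) * emultiplicity (p:ℤ) (f.coeff i) := mul_le_mul_right hek _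
        _ ≤ dd p j k f i := le_add_of_le_of_nonneg le_rfl zero_le
    · exact le_of_eq hddj.symm
    · calc ((j*k:ℕ):ℕ∞) ≤ ((k*i:ℕ):ℕ∞) := by
            exact_mod_cast Nat.le_of_lt (by calc j*k = k*j := Nat.mul_comm j k
              _ < k*i := (Nat.mul_lt_mul_left hk).mpr hij)
        _ ≤ dd p j k f i := le_add_self
  have hstrictmid : ∀ i, 0 < i → i < j → ((j*k:ℕ):ℕ∞) < dd p j k f i := by
    intro i hi0 hij
    have hek : (k:ℕ∞) ≤ emultiplicity (p:ℤ) (f.coeff i) := by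
      rw [hfc i (le_trans hij.le hjm)]
      exact pow_dvd_iff_le_emultiplicity.mp (hdvd i hij)
    calc ((j*k:ℕ):ℕ∞) < ((j*k + k*i:ℕ):ℕ∞) := by
          exact_mod_cast Nat.lt_add_of_pos_right (Nat.mul_pos hk hi0)
      _ = (j:ℕ∞) * (k:ℕ∞) + ((k*i:ℕ):ℕ∞) := by push_cast; ring
      _ ≤ dd p j k f i := add_le_add (mul_le_mul_right hek _) le_rfl
  have hstrictabove : ∀ i, j < i → ((j*k:ℕ):ℕ∞) < dd p j k f i := by
    intro i hij
    calc ((j*k:ℕ):ℕ∞) < ((k*i:ℕ):ℕ∞) := by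
          exact_mod_cast (by calc j*k = k*j := Nat.mul_comm j k
            _ < k*i := (Nat.mul_lt_mul_left hk).mpr hij)
      _ ≤ dd p j k f i := le_add_self
  -- profiles for g and h
  obtain ⟨W1, i0g, i1g, hgi01, hgi1d, hg2, hg2', hg1, hg3, hg3'⟩ :=
    exists_profile p j k hp hj0 g hgne
  obtain ⟨W2, i0h, i1h, hhi01, hhi1d, hh2, hh2', hh1, hh3, hh3'⟩ :=
    exists_profile p j k hp hj0 h hhne
  -- exact values at bottom and top
  have hbot : dd p j k (g*h) (i0g+i0h) = ((W1+W2:ℕ):ℕ∞) := by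
    refine dd_mul_exact p hp j k hj0 g h W1 W2 i0g i0h hg1 hg2 hh1 hh2 ?_
    intro x1 x2 hx hne
    rcases lt_trichotomy x1 i0g with hx1 | hx1 | hx1
    · exact Or.inl (hg3 _ hx1)
    · exact absurd ⟨hx1, by omega⟩ hne
    · exact Or.inr (hh3 _ (by omega))
  have htop : dd p j k (g*h) (i1g+i1h) = ((W1+W2:ℕ):ℕ∞) := by
    refine dd_mul_exact p hp j k hj0 g h W1 W2 i1g i1h hg1 hg2' hh1 hh2' ?_
    intro x1 x2 hx hne
    rcases lt_trichotomy x1 i1g with hx1 | hx1 | hx1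
    · exact Or.inr (hh3' _ (by omega))
    · exact absurd ⟨hx1, by omega⟩ hne
    · exact Or.inl (hg3' _ hx1)
  -- global bounds for product
  have hprodglob : ∀ n, ((W1+W2:ℕ):ℕ∞) ≤ dd p j k (g*h) n := by
    intro n
    refine dd_mul_ge p hp j k g h n _ (fun x1 x2 hx => ?_)
    calc ((W1+W2:ℕ):ℕ∞) = (W1:ℕ∞) + (W2:ℕ∞) := by push_cast; ring
      _ ≤ _ := add_le_add (hg1 _) (hh1 _)
  have hprodbelow : ∀ n, n < i0g + i0h → ((W1+W2+1:ℕ):ℕ∞) ≤ dd p j k (g*h) n := by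
    intro n hn
    refine dd_mul_ge p hp j k g h n _ (fun x1 x2 hx => ?_)
    rcases lt_or_ge x1 i0g with hx1 | hx1
    · calc ((W1+W2+1:ℕ):ℕ∞) = ((W1+1:ℕ):ℕ∞) + (W2:ℕ∞) := by push_cast; ring
        _ ≤ _ := add_le_add ((enat_lt_coe _ _).mp (hg3 _ hx1)) (hh1 _)
    · calc ((W1+W2+1:ℕ):ℕ∞) = (W1:ℕ∞) + ((W2+1:ℕ):ℕ∞) := by push_cast; ring
        _ ≤ _ := add_le_add (hg1 _) ((enat_lt_coe _ _).mp (hh3 _ (by omega)))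
  have hprodabove : ∀ n, i1g + i1h < n → ((W1+W2+1:ℕ):ℕ∞) ≤ dd p j k (g*h) n := by
    intro n hn
    refine dd_mul_ge p hp j k g h n _ (fun x1 x2 hx => ?_)
    rcases lt_or_ge i1g x1 with hx1 | hx1
    · calc ((W1+W2+1:ℕ):ℕ∞) = ((W1+1:ℕ):ℕ∞) + (W2:ℕ∞) := by push_cast; ring
        _ ≤ _ := add_le_add ((enat_lt_coe _ _).mp (hg3' _ hx1)) (hh1 _)
    · calc ((W1+W2+1:ℕ):ℕ∞) = (W1:ℕ∞) + ((W2+1:ℕ):ℕ∞) := by push_cast; ring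
        _ ≤ _ := add_le_add (hg1 _) ((enat_lt_coe _ _).mp (hh3' _ (by omega)))
  -- transfer f facts to the product
  rw [hfac] at hdd0 hddj hglobf hstrictmid hstrictabove
  -- the common value is j*k
  have hWsum : W1 + W2 = j * k := by
    have h1 : ((j*k:ℕ):ℕ∞) ≤ ((W1+W2:ℕ):ℕ∞) := hbot ▸ hglobf (i0g+i0h)
    have h2 : ((W1+W2:ℕ):ℕ∞) ≤ ((j*k:ℕ):ℕ∞) := hdd0 ▸ hprodglob 0
    have h1' : j*k ≤ W1+W2 := by exact_mod_cast h1
    have h2' : W1+W2 ≤ j*k := by exact_mod_cast h2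
    omega
  -- bottom index is 0
  have hbot0 : i0g + i0h = 0 := by
    by_contra hb
    have hlt : 0 < i0g + i0h := Nat.pos_of_ne_zero hb
    have := (hprodbelow 0 hlt).trans (le_of_eq hdd0)
    have : W1+W2+1 ≤ j*k := by exact_mod_cast this
    omega
  -- top index is j
  have htopj : i1g + i1h = j := by
    rcases lt_trichotomy (i1g + i1h) j with ht | ht | ht
    · have := (hprodabove j ht).trans (le_of_eq hddj)
      have : W1+W2+1 ≤ j*k := by exact_mod_cast this
      omega
    · exact ht
    · have := (hstrictabove _ ht).trans_le (le_of_eq htop)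
      have : j*k < W1+W2 := by exact_mod_cast this
      omega
  -- extract natural-number equations for g
  have hi0g : i0g = 0 := by omega
  obtain ⟨α0, hα0⟩ := dd_eq_nat p j k hj0 g i0g W1 hg2
  obtain ⟨α1, hα1⟩ := dd_eq_nat p j k hj0 g i1g W1 hg2'
  obtain ⟨β0, hβ0⟩ := dd_eq_nat p j k hj0 h i0h W2 hh2
  obtain ⟨β1, hβ1⟩ := dd_eq_nat p j k hj0 h i1h W2 hh2'
  -- j ∣ k * i1g and j ∣ k * i1h
  have hdg : j ∣ i1g * k := by
    have heqz : (j:ℤ)*α0 + (k:ℤ)*i0g = (j:ℤ)*α1 + (k:ℤ)*i1g := by exact_mod_cast hα0.trans hα1.symm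
    have hdvdz : (j:ℤ) ∣ (i1g:ℤ)*(k:ℤ) := ⟨(α0:ℤ) - α1 + i0g * k / j * 0, by
      rw [hi0g] at heqz; push_cast [hi0g] at heqz ⊢; linarith⟩
    exact_mod_cast hdvdz
  have hdh : j ∣ i1h * k := by
    have hi0h : i0h = 0 := by omega
    have heqz : (j:ℤ)*β0 + (k:ℤ)*i0h = (j:ℤ)*β1 + (k:ℤ)*i1h := by exact_mod_cast hβ0.trans hβ1.symm
    have hdvdz : (j:ℤ) ∣ (i1h:ℤ)*(k:ℤ) := ⟨(β0:ℤ) - β1, by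
      rw [hi0h] at heqz; push_cast at heqz ⊢; linarith⟩
    exact_mod_cast hdvdz
  have hdg' : j ∣ i1g := (Nat.Coprime.dvd_of_dvd_mul_right (hcop.symm) hdg)
  have hdh' : j ∣ i1h := (Nat.Coprime.dvd_of_dvd_mul_right (hcop.symm) hdh)
  have hg1g : i1g = 0 := Nat.eq_zero_of_dvd_of_lt hdg' (lt_of_le_of_lt hgi1d hgj)
  have hh1h : i1h = 0 := Nat.eq_zero_of_dvd_of_lt hdh' (lt_of_le_of_lt hhi1d hhj)
  omega
end

section
/- Let f = a_0 + a_1 z + ... + a_m z^m ∈ ℤ[z] be primitive, and suppose there exist a prime p and coprime positive integers k and m such that p does not divide a_m, p^k divides a_i for all i = 0, ..., m−1, and p^{k+1} does not divide a_0. Then f is irreducible in ℤ[z]. -/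
open Polynomial Finset

lemma exists_minmax (W : ℕ → ℤ) (S : Finset ℕ) (hS : S.Nonempty) :
    ∃ i1 i2, i1 ∈ S ∧ i2 ∈ S ∧ W i1 = W i2 ∧ (∀ u ∈ S, W i1 ≤ W u) ∧
      (∀ u, u < i1 → u ∈ S → W i1 < W u) ∧ (∀ u, i2 < u → u ∈ S → W i2 < W u) := by
  have hne : (S.image W).Nonempty := hS.image W
  set M := (S.image W).min' hne with hM
  have hMmem : M ∈ S.image W := Finset.min'_mem _ hne
  obtain ⟨u0, hu0S, hu0⟩ := Finset.mem_image.mp hMmem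
  set T := S.filter (fun u => W u = M) with hT
  have hTne : T.Nonempty := ⟨u0, Finset.mem_filter.mpr ⟨hu0S, hu0⟩⟩
  have h1 := Finset.mem_filter.mp (T.min'_mem hTne)
  have h2 := Finset.mem_filter.mp (T.max'_mem hTne)
  have hmin : ∀ u ∈ S, M ≤ W u := fun u hu => Finset.min'_le _ _ (Finset.mem_image_of_mem W hu)
  refine ⟨T.min' hTne, T.max' hTne, h1.1, h2.1, by rw [h1.2, h2.2], ?_, ?_, ?_⟩
  · intro u hu; rw [h1.2]; exact hmin u hu
  · intro u hu huS
    rcases lt_or_eq_of_le (h1.2 ▸ hmin u huS) with h | h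
    · exact h
    · exact absurd (Finset.min'_le T u (Finset.mem_filter.mpr ⟨huS, by rw [← h, h1.2]⟩)) (by omega)
  · intro u hu huS
    rcases lt_or_eq_of_le (h2.2 ▸ hmin u huS) with h | h
    · exact h
    · exact absurd (Finset.le_max' T u (Finset.mem_filter.mpr ⟨huS, by rw [← h, h2.2]⟩)) (by omega)

-- lower-bound + strict-below lemma (min version)
lemma aux_min (p : ℕ) [Fact p.Prime] (m k : ℕ) (hm : 1 ≤ m) (g h : ℤ[X]) (i j : ℕ)
    (hbi : g.coeff i ≠ 0) (hcj : h.coeff j ≠ 0)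
    (hgmin : ∀ u, g.coeff u ≠ 0 →
      (m:ℤ) * padicValInt p (g.coeff i) + k * i ≤ m * padicValInt p (g.coeff u) + k * u)
    (hgstr : ∀ u, u < i → g.coeff u ≠ 0 →
      (m:ℤ) * padicValInt p (g.coeff i) + k * i < m * padicValInt p (g.coeff u) + k * u)
    (hhmin : ∀ u, h.coeff u ≠ 0 →
      (m:ℤ) * padicValInt p (h.coeff j) + k * j ≤ m * padicValInt p (h.coeff u) + k * u)
    (hhstr : ∀ u, u < j → h.coeff u ≠ 0 →
      (m:ℤ) * padicValInt p (h.coeff j) + k * j < m * padicValInt p (h.coeff u) + k * u) :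
    ∀ n, (g*h).coeff n ≠ 0 →
      ((m:ℤ) * padicValInt p (g.coeff i) + k * i) + ((m:ℤ) * padicValInt p (h.coeff j) + k * j)
        ≤ m * padicValInt p ((g*h).coeff n) + k * n ∧
      (n < i + j →
        ((m:ℤ) * padicValInt p (g.coeff i) + k * i) + ((m:ℤ) * padicValInt p (h.coeff j) + k * j)
          < m * padicValInt p ((g*h).coeff n) + k * n) := by
  intro n hn
  set V := padicValInt p ((g*h).coeff n) with hV
  set c' : ℤ := ((m:ℤ) * padicValInt p (g.coeff i) + k * i) +
      ((m:ℤ) * padicValInt p (h.coeff j) + k * j) with hc'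
  -- key: if all nonzero terms have weight > m*V + k*n, contradiction
  have main : ∀ B : ℤ, (∀ x ∈ antidiagonal n, g.coeff x.1 ≠ 0 → h.coeff x.2 ≠ 0 →
      B ≤ (m:ℤ) * padicValInt p (g.coeff x.1) + k * x.1
        + ((m:ℤ) * padicValInt p (h.coeff x.2) + k * x.2)) →
      B ≤ (m:ℤ) * V + k * n := by
    intro B hB
    by_contra hlt
    push_neg at hlt
    have hdvd : (p:ℤ) ^ (V + 1) ∣ (g*h).coeff n := by
      rw [coeff_mul]
      refine Finset.dvd_sum ?_
      intro x hx
      by_cases hz : g.coeff x.1 = 0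
      · simp [hz]
      by_cases hz2 : h.coeff x.2 = 0
      · simp [hz2]
      have hxn : x.1 + x.2 = n := Finset.HasAntidiagonal.mem_antidiagonal.mp hx
      have hw := hB x hx hz hz2
      -- m*(v1+v2) + k*n ≥ B > m*V + k*n  ⇒  v1 + v2 > V
      have hgt : (V:ℤ) <
          (padicValInt p (g.coeff x.1) : ℤ) + padicValInt p (h.coeff x.2) := by
        nlinarith [hw, hlt, hxn, (by exact_mod_cast hxn : (x.1:ℤ) + x.2 = n)]
      rw [padicValInt_dvd_iff]
      right
      rw [padicValInt.mul hz hz2]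
      omega
    rw [padicValInt_dvd_iff] at hdvd
    rcases hdvd with h0 | hle
    · exact hn h0
    · omega
  constructor
  · refine main c' ?_
    intro x hx hz hz2
    have hxn : x.1 + x.2 = n := Finset.HasAntidiagonal.mem_antidiagonal.mp hx
    have := hgmin x.1 hz
    have := hhmin x.2 hz2
    omega
  · intro hlt
    have := main (c' + 1) ?_
    · omega
    intro x hx hz hz2
    have hxn : x.1 + x.2 = n := Finset.HasAntidiagonal.mem_antidiagonal.mp hx
    by_cases hcase : x.1 < i
    · have h1 := hgstr x.1 hcase hz
      have h2 := hhmin x.2 hz2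
      omega
    · have hx2 : x.2 < j := by omega
      have h1 := hgmin x.1 hz
      have h2 := hhstr x.2 hx2 hz2
      omega

lemma aux_max (p : ℕ) [Fact p.Prime] (m k : ℕ) (g h : ℤ[X]) (i j : ℕ)
    (hbi : g.coeff i ≠ 0) (hcj : h.coeff j ≠ 0)
    (hgmin : ∀ u, g.coeff u ≠ 0 →
      (m:ℤ) * padicValInt p (g.coeff i) + k * i ≤ m * padicValInt p (g.coeff u) + k * u)
    (hgstr : ∀ u, i < u → g.coeff u ≠ 0 →
      (m:ℤ) * padicValInt p (g.coeff i) + k * i < m * padicValInt p (g.coeff u) + k * u)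
    (hhmin : ∀ u, h.coeff u ≠ 0 →
      (m:ℤ) * padicValInt p (h.coeff j) + k * j ≤ m * padicValInt p (h.coeff u) + k * u)
    (hhstr : ∀ u, j < u → h.coeff u ≠ 0 →
      (m:ℤ) * padicValInt p (h.coeff j) + k * j < m * padicValInt p (h.coeff u) + k * u) :
    (g*h).coeff (i+j) ≠ 0 ∧
    padicValInt p ((g*h).coeff (i+j)) =
      padicValInt p (g.coeff i) + padicValInt p (h.coeff j) ∧
    ∀ n, i + j < n → (g*h).coeff n ≠ 0 →
      ((m:ℤ) * padicValInt p (g.coeff i) + k * i) + ((m:ℤ) * padicValInt p (h.coeff j) + k * j)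
        < m * padicValInt p ((g*h).coeff n) + k * n := by
  set c : ℕ := padicValInt p (g.coeff i) + padicValInt p (h.coeff j) with hc
  -- the off-diagonal part is divisible by p^(c+1)
  have hrest : (p:ℤ) ^ (c+1) ∣ ((g*h).coeff (i+j) - g.coeff i * h.coeff j) := by
    rw [coeff_mul, ← Finset.add_sum_erase _ _ (Finset.HasAntidiagonal.mem_antidiagonal.mpr rfl :
        ((i,j) : ℕ × ℕ) ∈ antidiagonal (i+j))]
    rw [add_sub_cancel_left]
    refine Finset.dvd_sum ?_
    intro x hx
    have hxmem := Finset.mem_erase.mp hx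
    have hxn : x.1 + x.2 = i + j := Finset.HasAntidiagonal.mem_antidiagonal.mp hxmem.2
    by_cases hz : g.coeff x.1 = 0
    · simp [hz]
    by_cases hz2 : h.coeff x.2 = 0
    · simp [hz2]
    have hne : x.1 ≠ i := by
      intro hH; apply hxmem.1
      have : x.2 = j := by omega
      exact Prod.ext hH this
    have hxZ : (x.1:ℤ) + x.2 = (i:ℤ) + j := by exact_mod_cast hxn
    have hcz : (c:ℤ) = (padicValInt p (g.coeff i) : ℤ) + padicValInt p (h.coeff j) := by
      rw [hc]; push_cast; ring
    have hmpos : (0:ℤ) ≤ (m:ℤ) := by positivity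
    have hkn : (k:ℤ) * x.1 + k * x.2 = k * i + k * j := by
      rw [← mul_add, hxZ]; ring
    have hma : (m:ℤ) * padicValInt p (g.coeff x.1) + m * padicValInt p (h.coeff x.2)
        = m * ((padicValInt p (g.coeff x.1) : ℤ) + padicValInt p (h.coeff x.2)) :=
      (mul_add _ _ _).symm
    have hgt : (c:ℤ) < (padicValInt p (g.coeff x.1) : ℤ) + padicValInt p (h.coeff x.2) := by
      have hmul : (m:ℤ) * c <
          (m:ℤ) * ((padicValInt p (g.coeff x.1) : ℤ) + padicValInt p (h.coeff x.2)) := by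
        rw [hcz, mul_add]
        rcases lt_or_gt_of_ne hne with hlt | hgt
        · have h1 := hgmin x.1 hz
          have h2 := hhstr x.2 (by omega) hz2
          linarith [h1, h2, hkn, hma]
        · have h1 := hgstr x.1 hgt hz
          have h2 := hhmin x.2 hz2
          linarith [h1, h2, hkn, hma]
      exact lt_of_mul_lt_mul_left hmul (by positivity)
    rw [padicValInt_dvd_iff]
    right
    rw [padicValInt.mul hz hz2]
    omega
  have hmainne : g.coeff i * h.coeff j ≠ 0 := mul_ne_zero hbi hcj
  have hmainval : padicValInt p (g.coeff i * h.coeff j) = c := padicValInt.mul hbi hcj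
  have hnotdvd : ¬ (p:ℤ) ^ (c+1) ∣ g.coeff i * h.coeff j := by
    rw [padicValInt_dvd_iff]
    push_neg
    exact ⟨hmainne, by omega⟩
  have hne0 : (g*h).coeff (i+j) ≠ 0 := by
    intro h0
    apply hnotdvd
    have := hrest
    rw [h0] at this
    simpa using (dvd_neg.mpr this)
  have hdvdc : (p:ℤ) ^ c ∣ (g*h).coeff (i+j) := by
    have h1 : (p:ℤ) ^ c ∣ ((g*h).coeff (i+j) - g.coeff i * h.coeff j) :=
      dvd_trans (pow_dvd_pow _ (by omega)) hrest
    have h2 : (p:ℤ) ^ c ∣ g.coeff i * h.coeff j := by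
      rw [padicValInt_dvd_iff]; right; omega
    simpa using dvd_add h1 h2
  have hnotdvd2 : ¬ (p:ℤ) ^ (c+1) ∣ (g*h).coeff (i+j) := by
    intro hdd
    apply hnotdvd
    have := dvd_sub hdd hrest
    simpa using this
  have hval : padicValInt p ((g*h).coeff (i+j)) = c := by
    rw [padicValInt_dvd_iff] at hdvdc hnotdvd2
    push_neg at hnotdvd2
    rcases hdvdc with h0 | hle
    · exact absurd h0 hne0
    · omega
  refine ⟨hne0, hval, ?_⟩
  -- strict part: same argument as aux_min, mirrored
  intro n hn hcoeff
  set V := padicValInt p ((g*h).coeff n) with hV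
  by_contra hlt
  push_neg at hlt
  have hdvd : (p:ℤ) ^ (V + 1) ∣ (g*h).coeff n := by
    rw [coeff_mul]
    refine Finset.dvd_sum ?_
    intro x hx
    by_cases hz : g.coeff x.1 = 0
    · simp [hz]
    by_cases hz2 : h.coeff x.2 = 0
    · simp [hz2]
    have hxn : x.1 + x.2 = n := Finset.HasAntidiagonal.mem_antidiagonal.mp hx
    have hxZ : (x.1:ℤ) + x.2 = (n:ℤ) := by exact_mod_cast hxn
    have hkn : (k:ℤ) * x.1 + k * x.2 = k * n := by rw [← mul_add, hxZ]
    have hma : (m:ℤ) * padicValInt p (g.coeff x.1) + m * padicValInt p (h.coeff x.2)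
        = m * ((padicValInt p (g.coeff x.1) : ℤ) + padicValInt p (h.coeff x.2)) :=
      (mul_add _ _ _).symm
    have hgt : (V:ℤ) < (padicValInt p (g.coeff x.1) : ℤ) + padicValInt p (h.coeff x.2) := by
      have hmul : (m:ℤ) * V <
          (m:ℤ) * ((padicValInt p (g.coeff x.1) : ℤ) + padicValInt p (h.coeff x.2)) := by
        by_cases hcase : i < x.1
        · have h1 := hgstr x.1 hcase hz
          have h2 := hhmin x.2 hz2
          linarith [h1, h2, hlt, hkn, hma]
        · have hx2 : j < x.2 := by omega
          have h1 := hgmin x.1 hz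
          have h2 := hhstr x.2 hx2 hz2
          linarith [h1, h2, hlt, hkn, hma]
      exact lt_of_mul_lt_mul_left hmul (by positivity)
    rw [padicValInt_dvd_iff]
    right
    rw [padicValInt.mul hz hz2]
    omega
  rw [padicValInt_dvd_iff] at hdvd
  rcases hdvd with h0 | hle
  · exact hcoeff h0
  · omega

/-- Case `j = m` of Theorem 1: an Eisenstein-type irreducibility criterion. -/
theorem stmt2 (m : ℕ) (a : ℕ → ℤ) (f : ℤ[X])
    (hf : f = ∑ i ∈ range (m + 1), C (a i) * X ^ i)
    (hprim : f.IsPrimitive)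
    (p : ℕ) (hp : p.Prime) (k : ℕ) (hk : 1 ≤ k) (hm : 1 ≤ m)
    (hcop : Nat.Coprime k m)
    (hndvd : ¬ (p : ℤ) ∣ a m)
    (hdvd : ∀ i < m, (p : ℤ) ^ k ∣ a i)
    (hndvd0 : ¬ (p : ℤ) ^ (k + 1) ∣ a 0) :
    Irreducible f := by
  haveI : Fact p.Prime := ⟨hp⟩
  have hcoeff : ∀ n, f.coeff n = if n < m + 1 then a n else 0 := by
    intro n; simp [hf, coeff_X_pow, Finset.sum_ite_eq', Finset.mem_range]
  have ham : a m ≠ 0 := fun h0 => hndvd (h0 ▸ dvd_zero _)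
  have ha0 : a 0 ≠ 0 := fun h0 => hndvd0 (h0 ▸ dvd_zero _)
  have hfm : f.coeff m = a m := by rw [hcoeff]; simp
  have hf0 : f.coeff 0 = a 0 := by rw [hcoeff]; simp
  have hfne : f ≠ 0 := fun h0 => ham (by rw [← hfm, h0, coeff_zero])
  have hdeg : f.natDegree = m := by
    refine le_antisymm (natDegree_le_iff_coeff_eq_zero.mpr fun N hN => ?_)
      (le_natDegree_of_ne_zero (hfm ▸ ham))
    rw [hcoeff]; rw [if_neg (by omega)]
  -- valuation facts about a 0 and a m
  have hvam : padicValInt p (a m) = 0 := padicValInt.eq_zero_of_not_dvd hndvd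
  have hva0 : padicValInt p (a 0) = k := by
    have h1 : k ≤ padicValInt p (a 0) := by
      rcases (padicValInt_dvd_iff k (a 0)).mp (hdvd 0 hm) with h0 | hle
      · exact absurd h0 ha0
      · exact hle
    have h2 : ¬ (k + 1 ≤ padicValInt p (a 0)) := fun hle =>
      hndvd0 ((padicValInt_dvd_iff _ _).mpr (Or.inr hle))
    omega
  -- global lower bound on the weight of f's coefficients
  have hWf : ∀ n, f.coeff n ≠ 0 → (m:ℤ) * k ≤ (m:ℤ) * padicValInt p (f.coeff n) + k * n := by
    intro n hn
    have hnm : n ≤ m := hdeg ▸ le_natDegree_of_ne_zero hn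
    rcases eq_or_lt_of_le hnm with rfl | hlt
    · rw [hfm, hvam]; push_cast; nlinarith
    · have hcn : f.coeff n = a n := by rw [hcoeff, if_pos (by omega)]
      have hvk : k ≤ padicValInt p (f.coeff n) := by
        rcases (padicValInt_dvd_iff k (f.coeff n)).mp (hcn ▸ hdvd n hlt) with h0 | hle
        · exact absurd h0 hn
        · exact hle
      have : (m:ℤ) * k ≤ (m:ℤ) * padicValInt p (f.coeff n) := by
        apply mul_le_mul_of_nonneg_left _ (by positivity)
        exact_mod_cast hvk
      have hpos : (0:ℤ) ≤ (k:ℤ) * n := by positivity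
      linarith
  constructor
  · intro hu
    have := natDegree_eq_zero_of_isUnit hu
    omega
  intro g h hgh
  by_contra hcon
  push_neg at hcon
  obtain ⟨hgu, hhu⟩ := hcon
  have hgne : g ≠ 0 := by rintro rfl; rw [zero_mul] at hgh; exact hfne hgh
  have hhne : h ≠ 0 := by rintro rfl; rw [mul_zero] at hgh; exact hfne hgh
  have hdg : 1 ≤ g.natDegree := by
    by_contra hd
    push_neg at hd
    obtain ⟨c, rfl⟩ := natDegree_eq_zero.mp (by omega : g.natDegree = 0)
    exact hgu (isUnit_C.mpr (hprim c ⟨h, hgh⟩))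
  have hdh : 1 ≤ h.natDegree := by
    by_contra hd
    push_neg at hd
    obtain ⟨c, rfl⟩ := natDegree_eq_zero.mp (by omega : h.natDegree = 0)
    exact hhu (isUnit_C.mpr (hprim c ⟨g, by rw [hgh, mul_comm]⟩))
  have hsum : g.natDegree + h.natDegree = m := by
    rw [← natDegree_mul hgne hhne, ← hgh, hdeg]
  subst hgh
  -- min / max index selections for g and h
  obtain ⟨i1, i2, hi1S, hi2S, hgEq, hgmin, hgstr1, hgstr2⟩ :=
    exists_minmax (fun u => (m:ℤ) * padicValInt p (g.coeff u) + k * u) g.support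
      (Polynomial.support_nonempty.mpr hgne)
  obtain ⟨j1, j2, hj1S, hj2S, hhEq, hhmin, hhstr1, hhstr2⟩ :=
    exists_minmax (fun u => (m:ℤ) * padicValInt p (h.coeff u) + k * u) h.support
      (Polynomial.support_nonempty.mpr hhne)

  have hb1 : g.coeff i1 ≠ 0 := mem_support_iff.mp hi1S
  have hb2 : g.coeff i2 ≠ 0 := mem_support_iff.mp hi2S
  have hc1 : h.coeff j1 ≠ 0 := mem_support_iff.mp hj1S
  have hc2 : h.coeff j2 ≠ 0 := mem_support_iff.mp hj2S
  have Hmin := aux_min p m k hm g h i1 j1 hb1 hc1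
    (fun u hu => hgmin u (mem_support_iff.mpr hu))
    (fun u hu hnz => hgstr1 u hu (mem_support_iff.mpr hnz))
    (fun u hu => hhmin u (mem_support_iff.mpr hu))
    (fun u hu hnz => hhstr1 u hu (mem_support_iff.mpr hnz))
  have Hmax := aux_max p m k g h i2 j2 hb2 hc2
    (fun u hu => hgEq ▸ hgmin u (mem_support_iff.mpr hu))
    (fun u hu hnz => hgEq ▸ hgstr2 u hu (mem_support_iff.mpr hnz))
    (fun u hu => hhEq ▸ hhmin u (mem_support_iff.mpr hu))
    (fun u hu hnz => hhEq ▸ hhstr2 u hu (mem_support_iff.mpr hnz))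
  obtain ⟨Hne, Hval, Hstr⟩ := Hmax
  set c' : ℤ := ((m:ℤ) * padicValInt p (g.coeff i1) + k * i1) +
      ((m:ℤ) * padicValInt p (h.coeff j1) + k * j1) with hc'
  have hc'max : ((m:ℤ) * padicValInt p (g.coeff i2) + k * i2) +
      ((m:ℤ) * padicValInt p (h.coeff j2) + k * j2) = c' := by
    rw [hc', hgEq, hhEq]
  -- c' ≥ m*k from the exact value at i2 + j2
  have hW22 : (m:ℤ) * padicValInt p ((g*h).coeff (i2+j2)) + k * (i2+j2) = c' := by
    rw [Hval, ← hc'max]; push_cast; ring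
  have hge : (m:ℤ) * k ≤ c' := hW22 ▸ hWf (i2+j2) Hne
  -- c' ≤ m*k from the lower bound at 0
  have hcoeff0 : (g*h).coeff 0 ≠ 0 := by rw [hf0]; exact ha0
  obtain ⟨hle0, hstr0⟩ := Hmin 0 hcoeff0
  rw [hf0, hva0] at hle0 hstr0
  have hle : c' ≤ (m:ℤ) * k := by
    push_cast at hle0; linarith
  -- hence i1 + j1 = 0
  have hij1 : i1 + j1 = 0 := by
    by_contra hne0
    have := hstr0 (by omega)
    push_cast at this
    linarith
  -- and i2 + j2 = m
  have hij2le : i2 + j2 ≤ m := by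
    have := le_natDegree_of_ne_zero Hne
    rw [natDegree_mul hgne hhne, hsum] at this
    exact this
  have hij2 : i2 + j2 = m := by
    rcases eq_or_lt_of_le hij2le with he | hlt
    · exact he
    · exfalso
      have hcm : (g*h).coeff m ≠ 0 := by rw [hfm]; exact ham
      have := Hstr m hlt hcm
      rw [hfm, hvam] at this
      push_cast at this
      have hkm : (m:ℤ) * k = (k:ℤ) * m := mul_comm _ _
      linarith [hc'max, hge, this, hkm]
  -- i2 = natDegree g, and i1 = 0
  have hi2r : i2 = g.natDegree := by
    have h1 : i2 ≤ g.natDegree := le_natDegree_of_ne_zero hb2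
    have h2 : j2 ≤ h.natDegree := le_natDegree_of_ne_zero hc2
    omega
  have hi10 : i1 = 0 := by omega
  -- weight equality at 0 and i2 for g gives m ∣ k * i2
  rw [hi10] at hgEq
  have hdvdm : (m:ℤ) ∣ (k * i2 : ℕ) := by
    refine ⟨(padicValInt p (g.coeff 0) : ℤ) - padicValInt p (g.coeff i2), ?_⟩
    push_cast
    push_cast at hgEq
    linarith [hgEq]
  have hdvdmn : m ∣ k * i2 := by exact_mod_cast hdvdm
  have hmi2 : m ∣ i2 := Nat.Coprime.dvd_of_dvd_mul_left hcop.symm hdvdmn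
  have : m ≤ i2 := Nat.le_of_dvd (by omega) hmi2
  omega
end

section
/- Let f = a_0 + a_1 z + ... + a_m z^m ∈ ℤ[z] be primitive with m ≥ 2, and suppose there exist a prime p and positive integers k and m−1 coprime such that p does not divide a_{m-1}, p^k divides a_i for i = 0, ..., m−2, p^{k+1} does not divide a_0, and f has no rational root. Then f is irreducible in ℤ[z]. -/
open Polynomial Finset

namespace Stmt3Aux

variable {p : ℕ} [Fact p.Prime]

lemma le_v {n : ℕ} {x : ℤ} (hx : x ≠ 0) (hd : (p:ℤ)^n ∣ x) : n ≤ padicValInt p x :=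
  ((padicValInt_dvd_iff n x).mp hd).resolve_left hx

lemma v_dvd (x : ℤ) : (p:ℤ)^(padicValInt p x) ∣ x := padicValInt_dvd x

lemma maxmin (w : ℕ → ℕ) (s : Finset ℕ) (hs : s.Nonempty) :
    ∃ I ∈ s, (∀ i ∈ s, w I ≤ w i) ∧ (∀ i ∈ s, I < i → w I < w i) := by
  classical
  obtain ⟨i₀, hi₀s, hi₀⟩ := s.exists_min_image w hs
  set A := s.filter fun i => w i = w i₀ with hA
  have hAne : A.Nonempty := ⟨i₀, by simp [hA, hi₀s]⟩
  have hmem := Finset.mem_filter.mp (A.max'_mem hAne)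
  refine ⟨A.max' hAne, hmem.1, ?_, ?_⟩
  · intro i hi; rw [hmem.2]; exact hi₀ i hi
  · intro i hi hlt
    rcases lt_or_eq_of_le (hmem.2 ▸ hi₀ i hi : w (A.max' hAne) ≤ w i) with hlt' | heq
    · exact hlt'
    · exfalso
      have : i ∈ A := Finset.mem_filter.mpr ⟨hi, by rw [← heq, hmem.2]⟩
      exact absurd (Finset.le_max' A i this) (not_le.mpr hlt)

lemma exists_pair (g h : ℤ[X]) (t : ℕ) (ht : (g*h).coeff t ≠ 0) :
    ∃ i j, i + j = t ∧ g.coeff i ≠ 0 ∧ h.coeff j ≠ 0 ∧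
      padicValInt p (g.coeff i) + padicValInt p (h.coeff j) ≤ padicValInt p ((g*h).coeff t) := by
  classical
  set T := (antidiagonal t).filter (fun ij => g.coeff ij.1 * h.coeff ij.2 ≠ 0) with hT
  have hTne : T.Nonempty := by
    by_contra hTe
    rw [Finset.not_nonempty_iff_eq_empty, hT, Finset.filter_eq_empty_iff] at hTe
    apply ht
    rw [coeff_mul]
    exact Finset.sum_eq_zero fun ij hij => not_not.mp (hTe hij)
  obtain ⟨ij, hijT, hmin⟩ := T.exists_min_image
    (fun ij => padicValInt p (g.coeff ij.1) + padicValInt p (h.coeff ij.2)) hTne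
  rw [hT, Finset.mem_filter, HasAntidiagonal.mem_antidiagonal] at hijT
  obtain ⟨hsum, hne⟩ := hijT
  have hg : g.coeff ij.1 ≠ 0 := left_ne_zero_of_mul hne
  have hh : h.coeff ij.2 ≠ 0 := right_ne_zero_of_mul hne
  refine ⟨ij.1, ij.2, hsum, hg, hh, le_v ht ?_⟩
  rw [coeff_mul]
  apply Finset.dvd_sum
  intro ij' hij'
  by_cases h0 : g.coeff ij'.1 * h.coeff ij'.2 = 0
  · rw [h0]; exact dvd_zero _
  · have hmem : ij' ∈ T := Finset.mem_filter.mpr ⟨hij', h0⟩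
    calc (p:ℤ)^(padicValInt p (g.coeff ij.1) + padicValInt p (h.coeff ij.2))
        ∣ (p:ℤ)^(padicValInt p (g.coeff ij'.1) + padicValInt p (h.coeff ij'.2)) :=
          pow_dvd_pow _ (hmin ij' hmem)
      _ ∣ g.coeff ij'.1 * h.coeff ij'.2 := by
          rw [pow_add]; exact mul_dvd_mul (v_dvd _) (v_dvd _)
lemma key (m k : ℕ) (hm : 2 ≤ m) (hk : 1 ≤ k) (hcop : Nat.Coprime k (m-1))
    (g h : ℤ[X]) (hg2 : 2 ≤ g.natDegree) (hh2 : 2 ≤ h.natDegree)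
    (hn : (g*h).natDegree ≤ m)
    (h00 : (g*h).coeff 0 ≠ 0)
    (h0 : padicValInt p ((g*h).coeff 0) = k)
    (hm1 : ¬ (p:ℤ) ∣ (g*h).coeff (m-1))
    (hmid : ∀ i, 0 < i → i < m - 1 → (p:ℤ)^k ∣ (g*h).coeff i) : False := by
  classical
  set v : ℤ → ℕ := padicValInt p with hv
  -- nonzero factors and constant coefficients
  have hF0 : g * h ≠ 0 := fun hc => h00 (by rw [hc, coeff_zero])
  have hg0 : g ≠ 0 := fun hc => hF0 (by rw [hc, zero_mul])
  have hh0 : h ≠ 0 := fun hc => hF0 (by rw [hc, mul_zero])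
  have hb0c0 : (g*h).coeff 0 = g.coeff 0 * h.coeff 0 := mul_coeff_zero g h
  have hb0 : g.coeff 0 ≠ 0 := left_ne_zero_of_mul (hb0c0 ▸ h00)
  have hc0 : h.coeff 0 ≠ 0 := right_ne_zero_of_mul (hb0c0 ▸ h00)
  -- weight functions
  set wg : ℕ → ℕ := fun i => (m-1) * v (g.coeff i) + k * i with hwg
  set wh : ℕ → ℕ := fun i => (m-1) * v (h.coeff i) + k * i with hwh
  obtain ⟨Ig, hIgs, hIgmin, hIgmax⟩ := maxmin wg g.support (support_nonempty.mpr hg0)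
  obtain ⟨Ih, hIhs, hIhmin, hIhmax⟩ := maxmin wh h.support (support_nonempty.mpr hh0)
  have hbIg : g.coeff Ig ≠ 0 := mem_support_iff.mp hIgs
  have hcIh : h.coeff Ih ≠ 0 := mem_support_iff.mp hIhs
  set e : ℕ := v (g.coeff Ig) + v (h.coeff Ih) with he
  -- Exactness at the corner index t1 = Ig + Ih
  have hmain_ne : g.coeff Ig * h.coeff Ih ≠ 0 := mul_ne_zero hbIg hcIh
  have hvmain : v (g.coeff Ig * h.coeff Ih) = e := padicValInt.mul hbIg hcIh
  have le_v' : ∀ {n : ℕ} {x : ℤ}, x ≠ 0 → (p:ℤ)^n ∣ x → n ≤ v x :=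
    fun hx hd => le_v hx hd
  have v_dvd' : ∀ x : ℤ, (p:ℤ)^(v x) ∣ x := fun x => v_dvd x
  have hmain_nd : ¬ (p:ℤ)^(e+1) ∣ g.coeff Ig * h.coeff Ih := by
    intro hd
    have := le_v' hmain_ne hd
    omega
  have hrest : (p:ℤ)^(e+1) ∣
      ∑ ij ∈ (antidiagonal (Ig + Ih)).erase (Ig, Ih), g.coeff ij.1 * h.coeff ij.2 := by
    apply Finset.dvd_sum
    intro ij hij
    rw [Finset.mem_erase, HasAntidiagonal.mem_antidiagonal] at hij
    obtain ⟨hne, hsum⟩ := hij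
    by_cases h0' : g.coeff ij.1 * h.coeff ij.2 = 0
    · rw [h0']; exact dvd_zero _
    · have hgi : g.coeff ij.1 ≠ 0 := left_ne_zero_of_mul h0'
      have hhj : h.coeff ij.2 ≠ 0 := right_ne_zero_of_mul h0'
      have hgi_s : ij.1 ∈ g.support := mem_support_iff.mpr hgi
      have hhj_s : ij.2 ∈ h.support := mem_support_iff.mpr hhj
      have hcase : Ig < ij.1 ∨ Ih < ij.2 := by
        by_contra hcon
        push_neg at hcon
        have h1 : ij.1 = Ig := by omega
        have h2 : ij.2 = Ih := by omega
        exact hne (Prod.ext h1 h2)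
      have hgt : e < v (g.coeff ij.1) + v (h.coeff ij.2) := by
        have h1 : wg Ig ≤ wg ij.1 := hIgmin _ hgi_s
        have h2 : wh Ih ≤ wh ij.2 := hIhmin _ hhj_s
        have h3 : wg Ig < wg ij.1 ∨ wh Ih < wh ij.2 := by
          rcases hcase with hcase | hcase
          · exact Or.inl (hIgmax _ hgi_s hcase)
          · exact Or.inr (hIhmax _ hhj_s hcase)
        have h4 : wg Ig + wh Ih < wg ij.1 + wh ij.2 := by omega
        simp only [hwg, hwh] at h4
        have hk4 : k * ij.1 + k * ij.2 = k * Ig + k * Ih := by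
          rw [← Nat.mul_add, ← Nat.mul_add, hsum]
        apply Nat.lt_of_mul_lt_mul_left (a := m-1)
        rw [he, Nat.mul_add, Nat.mul_add]
        omega
      calc (p:ℤ)^(e+1) ∣ (p:ℤ)^(v (g.coeff ij.1) + v (h.coeff ij.2)) := pow_dvd_pow _ hgt
        _ ∣ g.coeff ij.1 * h.coeff ij.2 := by
            rw [pow_add]; exact mul_dvd_mul (v_dvd _) (v_dvd _)
  have hsplit : (g*h).coeff (Ig + Ih) = g.coeff Ig * h.coeff Ih +
      ∑ ij ∈ (antidiagonal (Ig + Ih)).erase (Ig, Ih), g.coeff ij.1 * h.coeff ij.2 := by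
    rw [coeff_mul]
    exact (Finset.add_sum_erase (antidiagonal (Ig+Ih)) (fun ij => g.coeff ij.1 * h.coeff ij.2)
      (by simp : ((Ig, Ih) : ℕ × ℕ) ∈ antidiagonal (Ig+Ih))).symm
  have ht1_ne : (g*h).coeff (Ig + Ih) ≠ 0 := by
    intro hz
    apply hmain_nd
    have : g.coeff Ig * h.coeff Ih = (g*h).coeff (Ig+Ih) -
        ∑ ij ∈ (antidiagonal (Ig + Ih)).erase (Ig, Ih), g.coeff ij.1 * h.coeff ij.2 := by
      rw [hsplit]; ring
    rw [this, hz, zero_sub]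
    exact dvd_neg.mpr hrest
  have hvt1 : v ((g*h).coeff (Ig + Ih)) = e := by
    have hle : e ≤ v ((g*h).coeff (Ig + Ih)) := by
      apply le_v' ht1_ne
      rw [hsplit]
      refine dvd_add ?_ (dvd_trans (pow_dvd_pow _ (Nat.le_succ e)) hrest)
      rw [← hvmain]
      exact v_dvd' _
    rcases Nat.lt_or_ge (v ((g*h).coeff (Ig + Ih))) (e+1) with hlt | hge
    · omega
    · exfalso
      apply hmain_nd
      have hd : (p:ℤ)^(e+1) ∣ (g*h).coeff (Ig + Ih) :=
        dvd_trans (pow_dvd_pow _ hge) (v_dvd _)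
      have : g.coeff Ig * h.coeff Ih = (g*h).coeff (Ig+Ih) -
          ∑ ij ∈ (antidiagonal (Ig + Ih)).erase (Ig, Ih), g.coeff ij.1 * h.coeff ij.2 := by
        rw [hsplit]; ring
      rw [this]
      exact dvd_sub hd hrest
  -- weight facts about the product
  have hvm1 : v ((g*h).coeff (m-1)) = 0 := by
    rw [hv]; exact padicValInt.eq_zero_of_not_dvd hm1
  have hm1ne : (g*h).coeff (m-1) ≠ 0 := fun hz => hm1 (hz ▸ dvd_zero _)
  have hlow : ∀ t, (g*h).coeff t ≠ 0 → wg Ig + wh Ih ≤ (m-1) * v ((g*h).coeff t) + k * t := by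
    intro t ht
    obtain ⟨i, j, hij, hgi, hhj, hv0⟩ := exists_pair (p := p) g h t ht
    have hv' : v (g.coeff i) + v (h.coeff j) ≤ v ((g*h).coeff t) := hv0
    have h1 : wg Ig ≤ wg i := hIgmin _ (mem_support_iff.mpr hgi)
    have h2 : wh Ih ≤ wh j := hIhmin _ (mem_support_iff.mpr hhj)
    simp only [hwg, hwh] at h1 h2 ⊢
    have hk4 : k * i + k * j = k * t := by rw [← Nat.mul_add, hij]
    have h5 : (m-1) * (v (g.coeff i) + v (h.coeff j)) ≤ (m-1) * v ((g*h).coeff t) :=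
      Nat.mul_le_mul_left _ hv'
    rw [Nat.mul_add] at h5
    omega
  have hstrictlow : ∀ t, (g*h).coeff t ≠ 0 → Ig + Ih < t →
      wg Ig + wh Ih < (m-1) * v ((g*h).coeff t) + k * t := by
    intro t ht hlt
    obtain ⟨i, j, hij, hgi, hhj, hv0⟩ := exists_pair (p := p) g h t ht
    have hv' : v (g.coeff i) + v (h.coeff j) ≤ v ((g*h).coeff t) := hv0
    have h1 : wg Ig ≤ wg i := hIgmin _ (mem_support_iff.mpr hgi)
    have h2 : wh Ih ≤ wh j := hIhmin _ (mem_support_iff.mpr hhj)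
    have h3 : wg Ig < wg i ∨ wh Ih < wh j := by
      rcases (show Ig < i ∨ Ih < j by omega) with hc | hc
      · exact Or.inl (hIgmax _ (mem_support_iff.mpr hgi) hc)
      · exact Or.inr (hIhmax _ (mem_support_iff.mpr hhj) hc)
    simp only [hwg, hwh] at h1 h2 h3 ⊢
    have hk4 : k * i + k * j = k * t := by rw [← Nat.mul_add, hij]
    have h5 : (m-1) * (v (g.coeff i) + v (h.coeff j)) ≤ (m-1) * v ((g*h).coeff t) :=
      Nat.mul_le_mul_left _ hv'
    rw [Nat.mul_add] at h5
    omega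
  have hθle : wg Ig + wh Ih ≤ k * (m-1) := by
    have := hlow (m-1) hm1ne
    rw [hvm1] at this
    simpa using this
  have hwt1 : (m-1) * v ((g*h).coeff (Ig+Ih)) + k * (Ig+Ih) = wg Ig + wh Ih := by
    rw [hvt1, he]
    simp only [hwg, hwh]
    ring
  have hsum0 : v (g.coeff 0) + v (h.coeff 0) = k := by
    have hmul : v ((g*h).coeff 0) = v (g.coeff 0) + v (h.coeff 0) := by
      rw [hb0c0, hv]; exact padicValInt.mul hb0 hc0
    omega
  have ht1cases : Ig + Ih = 0 ∨ Ig + Ih = m - 1 := by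
    by_contra hc
    push_neg at hc
    rcases Nat.lt_or_ge (Ig + Ih) (m-1) with hlt | hge
    · have ht1pos : 0 < Ig + Ih := Nat.pos_of_ne_zero hc.1
      have hvk : k ≤ v ((g*h).coeff (Ig+Ih)) := le_v' ht1_ne (hmid _ ht1pos hlt)
      have h5 : (m-1) * k ≤ (m-1) * v ((g*h).coeff (Ig+Ih)) := Nat.mul_le_mul_left _ hvk
      have hcomm : (m-1) * k = k * (m-1) := Nat.mul_comm _ _
      have hkt : k * 1 ≤ k * (Ig + Ih) := Nat.mul_le_mul_left _ ht1pos
      omega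
    · have hgt : m - 1 < Ig + Ih := lt_of_le_of_ne hge (Ne.symm hc.2)
      have hkt : k * (m - 1 + 1) ≤ k * (Ig + Ih) := Nat.mul_le_mul_left _ hgt
      have hdist : k * (m - 1 + 1) = k * (m-1) + k * 1 := by rw [Nat.mul_add]
      omega
  have hθeq : wg Ig + wh Ih = k * (m-1) := by
    rcases ht1cases with hca | hca
    · have hIg0 : Ig = 0 := by omega
      have hIh0 : Ih = 0 := by omega
      rw [hIg0, hIh0]
      have hd2 : (m-1) * (v (g.coeff 0) + v (h.coeff 0)) = (m-1) * k := by rw [hsum0]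
      rw [Nat.mul_add] at hd2
      have hcomm : (m-1) * k = k * (m-1) := Nat.mul_comm _ _
      have hθg' : wg 0 = (m-1) * v (g.coeff 0) + k * 0 := rfl
      have hθh' : wh 0 = (m-1) * v (h.coeff 0) + k * 0 := rfl
      omega
    · rw [hca, hvm1] at hwt1
      simpa using hwt1.symm
  have ht1 : Ig + Ih = m - 1 := by
    rcases ht1cases with hca | hca
    · exfalso
      have := hstrictlow (m-1) hm1ne (by omega)
      rw [hvm1] at this
      simp only [Nat.mul_zero, Nat.zero_add] at this
      omega
    · exact hca
  have he0g : v (g.coeff Ig) = 0 := by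
    have h2 := hvt1
    rw [ht1, hvm1] at h2
    omega
  have he0h : v (h.coeff Ih) = 0 := by
    have h2 := hvt1
    rw [ht1, hvm1] at h2
    omega
  have hθg : wg Ig = k * Ig := by simp only [hwg, he0g, Nat.mul_zero, Nat.zero_add]
  have hθh : wh Ih = k * Ih := by simp only [hwh, he0h, Nat.mul_zero, Nat.zero_add]
  have hθg0 : wg Ig ≤ wg 0 := hIgmin _ (mem_support_iff.mpr hb0)
  have hθh0 : wh Ih ≤ wh 0 := hIhmin _ (mem_support_iff.mpr hc0)
  simp only [hwg, hwh, Nat.mul_zero, Nat.add_zero] at hθg0 hθh0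
  rw [he0g, Nat.mul_zero, Nat.zero_add] at hθg0
  rw [he0h, Nat.mul_zero, Nat.zero_add] at hθh0
  have hsplit2 : (m-1) * v (g.coeff 0) + (m-1) * v (h.coeff 0) = k * (m-1) := by
    have hd2 : (m-1) * (v (g.coeff 0) + v (h.coeff 0)) = (m-1) * k := by rw [hsum0]
    rw [Nat.mul_add] at hd2
    have hcomm : (m-1) * k = k * (m-1) := Nat.mul_comm _ _
    omega
  have hkk : k * Ig + k * Ih = k * (m-1) := by
    have hd2 : k * (Ig + Ih) = k * (m-1) := by rw [ht1]
    rw [Nat.mul_add] at hd2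
    omega
  have heqg : k * Ig = (m-1) * v (g.coeff 0) := by omega
  have heqh : k * Ih = (m-1) * v (h.coeff 0) := by omega
  have hdvdg : (m-1) ∣ Ig :=
    Nat.Coprime.dvd_of_dvd_mul_left hcop.symm ⟨v (g.coeff 0), heqg⟩
  have hdvdh : (m-1) ∣ Ih :=
    Nat.Coprime.dvd_of_dvd_mul_left hcop.symm ⟨v (h.coeff 0), heqh⟩
  have hdegs : g.natDegree + h.natDegree ≤ m := by
    rw [← natDegree_mul hg0 hh0]
    exact hn
  have hIgle : Ig ≤ g.natDegree := le_natDegree_of_ne_zero hbIg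
  have hIhle : Ih ≤ h.natDegree := le_natDegree_of_ne_zero hcIh
  have hIg0 : Ig = 0 := by
    rcases Nat.eq_zero_or_pos Ig with hca | hca
    · exact hca
    · exact absurd (Nat.le_of_dvd hca hdvdg) (by omega)
  have hIh0 : Ih = 0 := by
    rcases Nat.eq_zero_or_pos Ih with hca | hca
    · exact hca
    · exact absurd (Nat.le_of_dvd hca hdvdh) (by omega)
  omega


end Stmt3Aux

/-- Case `j = m - 1` of Theorem 1: irreducibility when `f` has no rational root. -/
theorem stmt3 (m : ℕ) (a : ℕ → ℤ) (f : ℤ[X])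
    (hf : f = ∑ i ∈ range (m + 1), C (a i) * X ^ i)
    (hprim : f.IsPrimitive) (hm : 2 ≤ m)
    (p : ℕ) (hp : p.Prime) (k : ℕ) (hk : 1 ≤ k)
    (hcop : Nat.Coprime k (m - 1))
    (hndvd : ¬ (p : ℤ) ∣ a (m - 1))
    (hdvd : ∀ i < m - 1, (p : ℤ) ^ k ∣ a i)
    (hndvd0 : ¬ (p : ℤ) ^ (k + 1) ∣ a 0)
    (hroot : ∀ q : ℚ, aeval q f ≠ 0) :
    Irreducible f := by
  haveI : Fact p.Prime := ⟨hp⟩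
  have hcoeff : ∀ i, f.coeff i = if i < m + 1 then a i else 0 := by
    intro i
    rw [hf, finset_sum_coeff]
    simp only [coeff_C_mul, coeff_X_pow, mul_ite, mul_one, mul_zero]
    rw [Finset.sum_ite_eq (range (m+1)) i a]
    simp [Finset.mem_range]
  have ham1 : f.coeff (m-1) = a (m-1) := by rw [hcoeff]; simp
  have ha0 : f.coeff 0 = a 0 := by rw [hcoeff]; simp
  have am1ne : a (m-1) ≠ 0 := fun hz => hndvd (hz ▸ dvd_zero _)
  have a0ne : a 0 ≠ 0 := fun hz => hndvd0 (hz ▸ dvd_zero _)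
  have hfne : f ≠ 0 := fun hz => am1ne (by rw [← ham1, hz, coeff_zero])
  have hfd : f.natDegree ≤ m := by
    rw [natDegree_le_iff_coeff_eq_zero]
    intro N hN
    rw [hcoeff]
    simp only [ite_eq_right_iff]
    omega
  have hva0 : padicValInt p (a 0) = k := by
    have h1 : k ≤ padicValInt p (a 0) := Stmt3Aux.le_v a0ne (hdvd 0 (by omega))
    have h2 : padicValInt p (a 0) < k + 1 := by
      by_contra hcon
      push_neg at hcon
      exact hndvd0 (dvd_trans (pow_dvd_pow _ hcon) (Stmt3Aux.v_dvd _))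
    omega
  constructor
  · intro hu
    have h1 := natDegree_eq_zero_of_isUnit hu
    have hle : m - 1 ≤ f.natDegree := le_natDegree_of_ne_zero (by rw [ham1]; exact am1ne)
    omega
  · intro g h' hgh
    by_contra hc
    push_neg at hc
    obtain ⟨hug, huh⟩ := hc
    have hkey : ∀ q r : ℤ[X], f = q * r → ¬ IsUnit q → 2 ≤ q.natDegree := by
      intro q r hqr hu
      have hq0 : q ≠ 0 := by rintro rfl; rw [zero_mul] at hqr; exact hfne hqr
      rcases Nat.lt_or_ge q.natDegree 2 with hlt | hge
      · exfalso
        have hcases : q.natDegree = 0 ∨ q.natDegree = 1 := by omega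
        rcases hcases with h1 | h1
        · apply hu
          have hqc : q = C (q.coeff 0) := eq_C_of_natDegree_eq_zero h1
          have hdvd' : C (q.coeff 0) ∣ f := by
            rw [hqr, ← hqc]
            exact dvd_mul_right q r
          rw [hqc]
          exact isUnit_C.mpr (hprim (q.coeff 0) hdvd')
        · have hlead : q.coeff 1 ≠ 0 := by
            have h2 : q.coeff q.natDegree ≠ 0 := mt leadingCoeff_eq_zero.mp hq0
            rwa [h1] at h2
          have hleadQ : (q.coeff 1 : ℚ) ≠ 0 := Int.cast_ne_zero.mpr hlead
          have hqc : q = C (q.coeff 1) * X + C (q.coeff 0) :=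
            eq_X_add_C_of_natDegree_le_one (by omega)
          set x : ℚ := -(q.coeff 0 : ℚ) / (q.coeff 1 : ℚ) with hx
          have haq : aeval x q = 0 := by
            rw [hqc]
            simp only [map_add, map_mul, aeval_C, aeval_X, algebraMap_int_eq, eq_intCast, map_intCast, hx]
            field_simp
            ring
          apply hroot x
          rw [hqr, map_mul, haq, zero_mul]
      · exact hge
    have hg2 := hkey g h' hgh hug
    have hh2 := hkey h' g (by rw [hgh, mul_comm]) huh
    refine Stmt3Aux.key (p := p) m k hm hk hcop g h' hg2 hh2 ?_ ?_ ?_ ?_ ?_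
    · rw [← hgh]; exact hfd
    · rw [← hgh, ha0]; exact a0ne
    · rw [← hgh, ha0]; exact hva0
    · rw [← hgh, ham1]; exact hndvd
    · intro i hipos hilt
      rw [← hgh, hcoeff]
      simp only [if_pos (by omega : i < m + 1)]
      exact hdvd i hilt
end

section
/- Let f = a_0 + a_1 z + ... + a_m z^m ∈ ℤ[z] be primitive with a_0 = ± p^k d for a prime p, positive integers k and d with p not dividing d, and suppose every complex zero of f satisfies |z| > d. If there exists an index j with 1 ≤ j ≤ m such that p does not divide a_j, then f is a product of at most min{k, j} irreducible factors in ℤ[z]. -/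
open Polynomial Finset

private lemma multiset_prod_gt {d : ℝ} (hd : 1 ≤ d) :
    ∀ (s : Multiset ℝ), s ≠ 0 → (∀ x ∈ s, d < x) → d < s.prod := by
  intro s
  induction s using Multiset.induction with
  | empty => simp
  | cons a t ih =>
    intro _ h
    rw [Multiset.prod_cons]
    have ha : d < a := h a (Multiset.mem_cons_self a t)
    by_cases ht : t = 0
    · simp [ht, ha]
    · have h1 : d < t.prod := ih ht (fun x hx => h x (Multiset.mem_cons_of_mem hx))
      calc d < a := ha
        _ = a * 1 := by ring
        _ ≤ a * t.prod := by
            apply mul_le_mul_of_nonneg_left (le_trans hd h1.le) (by linarith)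

private lemma const_coeff_bound (f g : ℤ[X]) (d : ℤ) (hd : 0 < d)
    (hgdvd : g ∣ f) (hgne : g ≠ 0) (hgdeg : 1 ≤ g.natDegree)
    (hroots : ∀ z : ℂ, aeval z f = 0 → (d : ℝ) < ‖z‖) :
    d < |g.coeff 0| := by
  set G : ℂ[X] := g.map (Int.castRingHom ℂ) with hG
  have hGne : G ≠ 0 := by
    rw [hG, Ne, Polynomial.map_eq_zero_iff (by exact_mod_cast Int.cast_injective)]
    exact hgne
  have hsplit : Splits G := IsAlgClosed.splits G
  have hGdeg : G.natDegree = g.natDegree := by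
    rw [hG]
    exact natDegree_map_eq_of_injective (by exact_mod_cast Int.cast_injective) g
  have hcard : G.roots.card = G.natDegree := (splits_iff_card_roots).mp hsplit
  have hrne : G.roots ≠ 0 := by
    intro h
    rw [h] at hcard
    simp at hcard
    omega
  -- each root has abs > d
  have habs : ∀ r ∈ G.roots, (d:ℝ) < ‖r‖ := by
    intro r hr
    apply hroots
    have hGr : G.eval r = 0 := (isRoot_of_mem_roots hr)
    have hdvd : G ∣ f.map (Int.castRingHom ℂ) := Polynomial.map_dvd _ hgdvd
    obtain ⟨q, hq⟩ := hdvd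
    rw [aeval_def, ← eval_map]
    have : (algebraMap ℤ ℂ) = Int.castRingHom ℂ := by rfl
    rw [this, hq, eval_mul, hGr, zero_mul]
  -- product formula
  have heq := hsplit.eq_prod_roots
  have heval : G.eval 0 = G.leadingCoeff * (G.roots.map (fun r => -r)).prod := by
    conv_lhs => rw [heq]
    rw [eval_mul, eval_C, eval_multiset_prod, Multiset.map_map]
    congr 2
    apply Multiset.map_congr rfl
    intro r _
    simp
  have hlc : (1:ℝ) ≤ ‖G.leadingCoeff‖ := by
    have h1 : G.leadingCoeff = ((g.leadingCoeff : ℤ) : ℂ) := by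
      rw [hG, leadingCoeff_map_of_injective (by exact_mod_cast Int.cast_injective)]
      rfl
    rw [h1, Complex.norm_intCast]
    have : g.leadingCoeff ≠ 0 := leadingCoeff_ne_zero.mpr hgne
    have : 1 ≤ |g.leadingCoeff| := Int.one_le_abs this
    exact_mod_cast this
  have hprodgt : (d:ℝ) < ((G.roots.map (fun r => -r)).map (‖·‖)).prod := by
    apply multiset_prod_gt (by exact_mod_cast hd)
    · simp [hrne]
    · intro x hx
      simp only [Multiset.mem_map] at hx
      obtain ⟨r, ⟨r', hr', rfl⟩, rfl⟩ := hx
      simpa using habs r' hr'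
  have hfinal : (d:ℝ) < ‖G.eval 0‖ := by
    rw [heval, norm_mul, show ‖(G.roots.map (fun r => -r)).prod‖ = ((G.roots.map (fun r => -r)).map (‖·‖)).prod from map_multiset_prod (normHom (α := ℂ)) _]
    calc (d:ℝ) < ((G.roots.map (fun r => -r)).map (‖·‖)).prod := hprodgt
      _ = 1 * ((G.roots.map (fun r => -r)).map (‖·‖)).prod := by ring
      _ ≤ ‖G.leadingCoeff‖ * ((G.roots.map (fun r => -r)).map (‖·‖)).prod := by
          apply mul_le_mul_of_nonneg_right hlc
          apply Multiset.prod_nonneg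
          intro x hx
          simp only [Multiset.mem_map] at hx
          obtain ⟨r, _, rfl⟩ := hx
          exact norm_nonneg _
  have h0 : G.eval 0 = ((g.coeff 0 : ℤ) : ℂ) := by
    rw [← coeff_zero_eq_eval_zero, hG, coeff_map]
    rfl
  rw [h0, Complex.norm_intCast] at hfinal
  exact_mod_cast hfinal

/-- Theorem 2: factorization into at most `min k j` irreducibles via the
prime factorization of the constant term and root location. -/
theorem stmt4 (m : ℕ) (a : ℕ → ℤ) (f : ℤ[X])
    (hf : f = ∑ i ∈ range (m + 1), C (a i) * X ^ i)
    (ham : a m ≠ 0) (hm : 1 ≤ m)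
    (hprim : f.IsPrimitive)
    (p : ℕ) (hp : p.Prime) (k : ℕ) (hk : 1 ≤ k) (d : ℤ) (hd : 0 < d)
    (hpd : ¬ (p : ℤ) ∣ d)
    (ε : ℤ) (hε : ε = 1 ∨ ε = -1)
    (ha0 : a 0 = ε * (p : ℤ) ^ k * d)
    (hroots : ∀ z : ℂ, aeval z f = 0 → (d : ℝ) < ‖z‖)
    (j : ℕ) (hj1 : 1 ≤ j) (hjm : j ≤ m) (hndvd : ¬ (p : ℤ) ∣ a j) :
    ∃ n : ℕ, n ≤ min k j ∧ ∃ g : Fin n → ℤ[X],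
      (∀ i, Irreducible (g i)) ∧ f = ∏ i, g i := by
  have hpz : Prime (p : ℤ) := Nat.prime_iff_prime_int.mp hp
  have hεu : IsUnit ε := by rcases hε with h | h <;> simp [h]
  -- coefficients of f
  have hcoeff : ∀ i, i ≤ m → f.coeff i = a i := by
    intro i hi
    rw [hf, finset_sum_coeff]
    simp only [coeff_C_mul, coeff_X_pow, mul_ite, mul_one, mul_zero]
    rw [Finset.sum_ite_eq]
    simp [Nat.lt_succ_iff, hi]
  have ha0ne : a 0 ≠ 0 := by
    rw [ha0]
    have : (p:ℤ) ^ k ≠ 0 := pow_ne_zero _ (by exact_mod_cast hp.ne_zero)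
    rcases hε with h | h <;> simp [h, this, hd.ne']
  have hf0 : f ≠ 0 := by
    intro h
    apply ha0ne
    rw [← hcoeff 0 (by omega), h, coeff_zero]
  have hfu : ¬ IsUnit f := by
    intro h
    have := natDegree_eq_zero_of_isUnit h
    have h2 : m ≤ f.natDegree := le_natDegree_of_ne_zero (by rw [hcoeff m le_rfl]; exact ham)
    omega
  -- factorization
  obtain ⟨s, hs, ⟨u, hu⟩⟩ := UniqueFactorizationMonoid.exists_prime_factors f hf0
  have hsne : s ≠ 0 := by
    intro h
    apply hfu
    rw [← hu, h]
    simp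
  set l := s.toList with hl
  set n := l.length with hn
  have hn1 : 1 ≤ n := by
    rcases Nat.eq_zero_or_pos n with h | h
    · exfalso; apply hsne
      have h2 := List.length_eq_zero_iff.mp h
      rwa [Multiset.toList_eq_nil] at h2
    · exact h
  haveI : NeZero n := ⟨by omega⟩
  have hmem : ∀ x ∈ l, Prime x := fun x hx => hs x (by rwa [← Multiset.mem_toList])
  set g : Fin n → ℤ[X] := fun i => (if i = (0 : Fin n) then (u : ℤ[X]) else 1) * l.get i with hg
  have hprod : f = ∏ i, g i := by
    have h1 : ∏ i, g i = (∏ i : Fin n, (if i = (0 : Fin n) then (u : ℤ[X]) else 1)) * ∏ i : Fin n, l.get i := by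
      rw [← Finset.prod_mul_distrib]
    have h2 : (∏ i : Fin n, (if i = (0 : Fin n) then (u : ℤ[X]) else 1)) = (u : ℤ[X]) := by
      rw [Finset.prod_ite_eq' (Finset.univ : Finset (Fin n)) (0 : Fin n) (fun _ => (u : ℤ[X]))]
      simp
    have h3 : ∏ i : Fin n, l.get i = s.prod := by
      rw [← List.prod_ofFn, List.ofFn_get, ← Multiset.prod_toList]
    rw [h1, h2, h3, ← hu, mul_comm]
  have hgirr : ∀ i, Irreducible (g i) := by
    intro i
    have hpr : Prime (l.get i) := hmem _ (l.get_mem i)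
    have : Associated (l.get i) (g i) := by
      by_cases h : i = (0 : Fin n)
      · have : g i = (u : ℤ[X]) * l.get i := by simp [hg, h]
        rw [this]
        exact ⟨u, by rw [mul_comm]⟩
      · have : g i = l.get i := by simp [hg, h]
        rw [this]
    exact this.irreducible hpr.irreducible
  -- each g i divides f, is primitive, nonzero, of positive degree
  have hgdvd : ∀ i, g i ∣ f := by
    intro i
    rw [hprod]
    exact Finset.dvd_prod_of_mem g (Finset.mem_univ i)
  have hgne : ∀ i, g i ≠ 0 := fun i h => hf0 (by
    rw [hprod]
    exact Finset.prod_eq_zero (Finset.mem_univ i) h)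
  have hgprim : ∀ i, (g i).IsPrimitive := fun i => isPrimitive_of_dvd hprim (hgdvd i)
  have hgdeg : ∀ i, 1 ≤ (g i).natDegree := by
    intro i
    by_contra h
    have h0 : (g i).natDegree = 0 := by omega
    obtain ⟨c, hc⟩ := natDegree_eq_zero.mp h0
    have : IsUnit c := hgprim i c (by rw [← hc])
    exact (hgirr i).not_isUnit (by rw [← hc]; exact this.map C)
  -- the key bound: d < |(g i).coeff 0|
  have hkey : ∀ i, d < |(g i).coeff 0| := fun i =>
    const_coeff_bound f (g i) d hd (hgdvd i) (hgne i) (hgdeg i) hroots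
  -- p divides each constant coefficient
  have hprod0 : ∏ i, (g i).coeff 0 = a 0 := by
    have : f.eval 0 = ∏ i, (g i).eval 0 := by rw [hprod, eval_prod]
    rw [← hcoeff 0 (by omega), coeff_zero_eq_eval_zero, this]
    exact Finset.prod_congr rfl fun i _ => coeff_zero_eq_eval_zero _
  have hpdvd : ∀ i, (p : ℤ) ∣ (g i).coeff 0 := by
    intro i
    by_contra h
    have hcop : IsCoprime ((p:ℤ)^k) ((g i).coeff 0) :=
      ((hpz.coprime_iff_not_dvd).mpr h).pow_left
    have hdvd : (g i).coeff 0 ∣ ε * (p:ℤ)^k * d := by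
      rw [← ha0, ← hprod0]
      exact Finset.dvd_prod_of_mem _ (Finset.mem_univ i)
    have hdvd2 : (g i).coeff 0 ∣ (p:ℤ)^k * d := by
      rcases hε with hh | hh
      · simpa [hh] using hdvd
      · rw [hh, show (-1:ℤ) * (p:ℤ)^k * d = -((p:ℤ)^k * d) by ring] at hdvd
        exact dvd_neg.mp hdvd
    have hdd : (g i).coeff 0 ∣ d := hcop.symm.dvd_of_dvd_mul_left hdvd2
    have : |(g i).coeff 0| ≤ d := by
      have := Int.le_of_dvd hd ((abs_dvd _ _).mpr hdd)
      exact this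
    exact absurd this (not_le.mpr (hkey i))
  -- n ≤ k
  have hnk : n ≤ k := by
    have hdvdn : ((p:ℤ))^n ∣ ε * (p:ℤ)^k * d := by
      rw [← ha0, ← hprod0]
      calc ((p:ℤ))^n = ∏ _i : Fin n, (p:ℤ) := by simp
        _ ∣ ∏ i, (g i).coeff 0 := Finset.prod_dvd_prod_of_dvd _ _ (fun i _ => hpdvd i)
    have hdvdn2 : ((p:ℤ))^n ∣ (p:ℤ)^k * d := by
      rcases hε with hh | hh
      · simpa [hh] using hdvdn
      · rw [hh, show (-1:ℤ) * (p:ℤ)^k * d = -((p:ℤ)^k * d) by ring] at hdvdn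
        exact dvd_neg.mp hdvdn
    by_contra h
    push_neg at h
    have h1 : ((p:ℤ))^(k+1) ∣ (p:ℤ)^k * d := dvd_trans (pow_dvd_pow _ (by omega)) hdvdn2
    rw [pow_succ] at h1
    have h2 : (p:ℤ) ∣ d := by
      have hpk : ((p:ℤ))^k ≠ 0 := pow_ne_zero _ (by exact_mod_cast hp.ne_zero)
      exact (mul_dvd_mul_iff_left hpk).mp h1
    exact hpd h2
  -- n ≤ j
  have hnj : n ≤ j := by
    by_contra h
    push_neg at h
    haveI : Fact p.Prime := ⟨hp⟩
    have hXdvd : (X : (ZMod p)[X])^n ∣ Polynomial.map (Int.castRingHom (ZMod p)) f := by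
      rw [hprod, Polynomial.map_prod]
      calc (X : (ZMod p)[X])^n = ∏ _i : Fin n, (X : (ZMod p)[X]) := by simp
        _ ∣ ∏ i, Polynomial.map (Int.castRingHom (ZMod p)) (g i) := by
            apply Finset.prod_dvd_prod_of_dvd
            intro i _
            rw [Polynomial.X_dvd_iff, coeff_map]
            exact_mod_cast (ZMod.intCast_zmod_eq_zero_iff_dvd _ _).mpr (hpdvd i)
    have hcj : (Polynomial.map (Int.castRingHom (ZMod p)) f).coeff j = 0 :=
      Polynomial.X_pow_dvd_iff.mp hXdvd j h
    rw [coeff_map, hcoeff j hjm] at hcj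
    exact hndvd ((ZMod.intCast_zmod_eq_zero_iff_dvd _ _).mp hcj)
  exact ⟨n, le_min hnk hnj, g, hgirr, hprod⟩
end

section
/- Let f = a_0 + a_1 z + ... + a_m z^m ∈ ℤ[z] be primitive with a_0 = ± p d for a prime p and positive integer d with p not dividing d, and suppose every complex zero of f satisfies |z| > d. Then f is irreducible in ℤ[z]. -/
open Polynomial Finset

/-- Analytic step: if every complex root of `h` has absolute value `> d ≥ 1` and
`h` has degree at least one, then `|h.coeff 0| > d`. -/
lemma stmt5_aux (d : ℤ) (hd1 : 1 ≤ d) (h : ℤ[X]) (hh : h ≠ 0) (hdeg : 1 ≤ h.natDegree)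
    (hroots : ∀ z : ℂ, Polynomial.aeval z h = 0 → (d : ℝ) < ‖z‖) :
    (d : ℝ) < |(h.coeff 0 : ℝ)| := by
  set H : ℂ[X] := h.map (Int.castRingHom ℂ) with hH
  have hinj : Function.Injective (Int.castRingHom ℂ) := Int.cast_injective
  have hHne : H ≠ 0 := by
    simpa [hH, Polynomial.map_eq_zero_iff hinj] using hh
  have hsplits : Splits H := IsAlgClosed.splits H
  have hcard : Multiset.card H.roots = H.natDegree :=
    (Polynomial.splits_iff_card_roots).mp hsplits
  have hdegH : H.natDegree = h.natDegree := by
    simpa [hH] using Polynomial.natDegree_map_eq_of_injective hinj h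
  have hroots' : ∀ z ∈ H.roots, (d : ℝ) < ‖z‖ := by
    intro z hz
    apply hroots
    have := (Polynomial.mem_roots hHne).mp hz
    rw [Polynomial.IsRoot, hH, Polynomial.eval_map] at this
    rw [Polynomial.aeval_def]
    exact this
  -- factor H
  have hfac : H = C H.leadingCoeff * (H.roots.map fun a => X - C a).prod :=
    hsplits.eq_prod_roots
  have heval0 : H.eval 0 = H.leadingCoeff * (H.roots.map fun a => -a).prod := by
    conv_lhs => rw [hfac]
    rw [Polynomial.eval_mul, Polynomial.eval_C, Polynomial.eval_multiset_prod,
      Multiset.map_map]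
    simp
  have habs : ‖H.eval 0‖
      = ‖H.leadingCoeff‖ * (H.roots.map fun a => ‖a‖).prod := by
    rw [heval0, norm_mul, show ‖(H.roots.map fun a => -a).prod‖ = ((H.roots.map fun a => -a).map (normHom : ℂ →*₀ ℝ)).prod from (Multiset.prod_hom _ (normHom : ℂ →*₀ ℝ)).symm, Multiset.map_map]
    simp
  -- leading coefficient has absolute value at least 1
  have hlead : H.leadingCoeff = (h.leadingCoeff : ℂ) := by
    simp [hH, Polynomial.leadingCoeff_map_of_injective hinj]
  have hlead1 : (1 : ℝ) ≤ ‖H.leadingCoeff‖ := by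
    rw [hlead, Complex.norm_intCast]
    have : h.leadingCoeff ≠ 0 := Polynomial.leadingCoeff_ne_zero.mpr hh
    exact_mod_cast Int.one_le_abs this
  -- roots are nonempty
  have hcardpos : 0 < Multiset.card H.roots := by
    rw [hcard, hdegH]; omega
  obtain ⟨r, hr⟩ := Multiset.card_pos_iff_exists_mem.mp hcardpos
  obtain ⟨t, ht⟩ := Multiset.exists_cons_of_mem hr
  have hd1R : (1 : ℝ) ≤ (d : ℝ) := by exact_mod_cast hd1
  have htprod : (1 : ℝ) ≤ (t.map fun a => ‖a‖).prod := by
    apply Multiset.one_le_prod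
    intro x hx
    obtain ⟨z, hz, rfl⟩ := Multiset.mem_map.mp hx
    have : z ∈ H.roots := by rw [ht]; exact Multiset.mem_cons_of_mem hz
    exact le_trans hd1R (le_of_lt (hroots' z this))
  have hrd : (d : ℝ) < ‖r‖ := hroots' r hr
  have hprodgt : (d : ℝ) < (H.roots.map fun a => ‖a‖).prod := by
    rw [ht, Multiset.map_cons, Multiset.prod_cons]
    calc (d : ℝ) < ‖r‖ := hrd
    _ = ‖r‖ * 1 := by ring
    _ ≤ ‖r‖ * (t.map fun a => ‖a‖).prod := by
        apply mul_le_mul_of_nonneg_left htprod (norm_nonneg r)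
  have hgt : (d : ℝ) < ‖H.eval 0‖ := by
    rw [habs]
    calc (d : ℝ) < (H.roots.map fun a => ‖a‖).prod := hprodgt
    _ = 1 * (H.roots.map fun a => ‖a‖).prod := by ring
    _ ≤ ‖H.leadingCoeff‖ * (H.roots.map fun a => ‖a‖).prod := by
        apply mul_le_mul_of_nonneg_right hlead1
        exact Multiset.prod_nonneg (by
          intro x hx
          obtain ⟨z, hz, rfl⟩ := Multiset.mem_map.mp hx
          exact norm_nonneg z)
  have : H.eval 0 = (h.coeff 0 : ℂ) := by
    simp [hH, Polynomial.eval_map, Polynomial.eval₂_at_zero]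
  rw [this, Complex.norm_intCast] at hgt
  exact hgt

/-- If `f = g * h` with `h.coeff 0 ∣ d`, then `h` has degree zero. -/
lemma stmt5_aux2 (d : ℤ) (hd : 0 < d) (f g h : ℤ[X]) (hfgh : f = g * h) (hfne : f ≠ 0)
    (hdvd : h.coeff 0 ∣ d)
    (hroots : ∀ z : ℂ, Polynomial.aeval z f = 0 → (d : ℝ) < ‖z‖) :
    h.natDegree = 0 := by
  by_contra hne
  have hdeg : 1 ≤ h.natDegree := Nat.one_le_iff_ne_zero.mpr hne
  have hhne : h ≠ 0 := by
    intro h0; exact hfne (by rw [hfgh, h0, mul_zero])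
  have hroots' : ∀ z : ℂ, Polynomial.aeval z h = 0 → (d : ℝ) < ‖z‖ := by
    intro z hz
    apply hroots
    rw [hfgh, map_mul, hz, mul_zero]
  have hgt := stmt5_aux d hd h hhne hdeg hroots'
  have hle : |h.coeff 0| ≤ d := Int.le_of_dvd hd ((abs_dvd _ _).mpr hdvd)
  have : |(h.coeff 0 : ℝ)| ≤ (d : ℝ) := by
    rw [← Int.cast_abs]; exact_mod_cast hle
  linarith

/-- Case `k = 1` of Theorem 2: irreducibility criterion. -/
theorem stmt5 (m : ℕ) (a : ℕ → ℤ) (f : ℤ[X])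
    (hf : f = ∑ i ∈ range (m + 1), C (a i) * X ^ i)
    (ham : a m ≠ 0) (hm : 1 ≤ m)
    (hprim : f.IsPrimitive)
    (p : ℕ) (hp : p.Prime) (d : ℤ) (hd : 0 < d)
    (hpd : ¬ (p : ℤ) ∣ d)
    (ε : ℤ) (hε : ε = 1 ∨ ε = -1)
    (ha0 : a 0 = ε * (p : ℤ) * d)
    (hroots : ∀ z : ℂ, aeval z f = 0 → (d : ℝ) < ‖z‖) :
    Irreducible f := by
  have hpZ : Prime (p : ℤ) := Nat.prime_iff_prime_int.mp hp
  have hcoeffm : f.coeff m = a m := by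
    rw [hf]
    rw [Polynomial.finset_sum_coeff]
    simp only [Polynomial.coeff_C_mul, Polynomial.coeff_X_pow, mul_ite, mul_one, mul_zero]
    rw [Finset.sum_ite_eq]
    simp
  have hcoeff0 : f.coeff 0 = a 0 := by
    rw [hf]
    rw [Polynomial.finset_sum_coeff]
    simp only [Polynomial.coeff_C_mul, Polynomial.coeff_X_pow, mul_ite, mul_one, mul_zero]
    rw [Finset.sum_ite_eq]
    simp
  have hfne : f ≠ 0 := fun h0 => ham (by rw [← hcoeffm, h0, Polynomial.coeff_zero])
  have hdegf : 1 ≤ f.natDegree := le_trans hm (Polynomial.le_natDegree_of_ne_zero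
    (by rw [hcoeffm]; exact ham))
  constructor
  · -- not a unit
    intro hu
    have := Polynomial.natDegree_eq_zero_of_isUnit hu
    omega
  · intro g h hfgh
    -- exactly one of g.coeff 0, h.coeff 0 is divisible by p
    have hmul : g.coeff 0 * h.coeff 0 = ε * (p : ℤ) * d := by
      rw [← ha0, ← hcoeff0, hfgh, Polynomial.mul_coeff_zero]
    have hpdvd : (p : ℤ) ∣ g.coeff 0 * h.coeff 0 := by
      rw [hmul]; exact ⟨ε * d, by ring⟩
    have hnotboth : ¬ ((p : ℤ) ∣ g.coeff 0 ∧ (p : ℤ) ∣ h.coeff 0) := by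
      rintro ⟨⟨u, hu⟩, ⟨v, hv⟩⟩
      apply hpd
      have hεd : (p : ℤ) ∣ ε * d := by
        have hpne : (p : ℤ) ≠ 0 := by exact_mod_cast hp.ne_zero
        have : (p : ℤ) * (ε * d) = (p:ℤ) * ((p:ℤ) * (u * v)) := by
          have := hmul
          rw [hu, hv] at this
          nlinarith [this]
        have := mul_left_cancel₀ hpne this
        exact ⟨u * v, this⟩
      rcases hε with rfl | rfl
      · simpa using hεd
      · simpa using hεd
    -- key: divisor fact for the factor not divisible by p
    have key : ∀ g' h' : ℤ[X], f = g' * h' → ¬ (p:ℤ) ∣ h'.coeff 0 →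
        g'.coeff 0 * h'.coeff 0 = ε * (p : ℤ) * d → h'.coeff 0 ∣ d := by
      intro g' h' hfgh' hnd hmul'
      have hpg : (p : ℤ) ∣ g'.coeff 0 := by
        rcases hpZ.dvd_mul.mp (by rw [hmul']; exact ⟨ε * d, by ring⟩) with h1 | h1
        · exact h1
        · exact absurd h1 hnd
      obtain ⟨c, hc⟩ := hpg
      have hpne : (p : ℤ) ≠ 0 := by exact_mod_cast hp.ne_zero
      have : c * h'.coeff 0 = ε * d := by
        apply mul_left_cancel₀ hpne
        rw [← mul_assoc]
        rw [← hc]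
        rw [hmul']; ring
      have hdvdεd : h'.coeff 0 ∣ ε * d := ⟨c, by rw [← this]; ring⟩
      rcases hε with rfl | rfl
      · simpa using hdvdεd
      · simpa using hdvdεd
    -- in either case, one of g, h is a constant
    have hconst : g.natDegree = 0 ∨ h.natDegree = 0 := by
      by_cases hcase : (p : ℤ) ∣ h.coeff 0
      · left
        have hng : ¬ (p : ℤ) ∣ g.coeff 0 := fun hg => hnotboth ⟨hg, hcase⟩
        exact stmt5_aux2 d hd f h g (by rw [hfgh]; ring) hfne
          (key h g (by rw [hfgh]; ring) hng (by rw [← hmul]; ring)) hroots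
      · right
        exact stmt5_aux2 d hd f g h hfgh hfne (key g h hfgh hcase hmul) hroots
    -- a constant factor of a primitive polynomial is a unit
    rcases hconst with h0 | h0
    · left
      have hgC : g = C (g.coeff 0) := Polynomial.eq_C_of_natDegree_eq_zero h0
      rw [hgC]
      rw [Polynomial.isUnit_C]
      exact hprim (g.coeff 0) ⟨h, by rw [← hgC, hfgh]⟩
    · right
      have hhC : h = C (h.coeff 0) := Polynomial.eq_C_of_natDegree_eq_zero h0
      rw [hhC]
      rw [Polynomial.isUnit_C]
      exact hprim (h.coeff 0) ⟨g, by rw [← hhC, hfgh]; ring⟩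
end

section
/- Let f = a_0 + a_1 z + ... + a_m z^m ∈ ℤ[z] be primitive with a_m = ± p^k d for a prime p and positive integers k, d with p not dividing d, and suppose every complex zero of f satisfies |z| > d. Suppose there is an index j with 1 ≤ j ≤ m such that p does not divide a_{m-j}, and that |a_0/q| ≤ |a_m| where q is the smallest prime divisor of a_0. Then f is a product of at most min{k, j} irreducible factors in ℤ[z]. -/
open Polynomial Finset

private lemma multiset_prod_ge {d : ℝ} (hd : 0 < d) :
    ∀ (S : Multiset ℝ), (∀ r ∈ S, d < r) → d ^ Multiset.card S ≤ S.prod := by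
  intro S
  induction S using Multiset.induction with
  | empty => simp
  | cons a S ih =>
    intro h
    have hS := ih (fun r hr => h r (Multiset.mem_cons_of_mem hr))
    have ha : d < a := h a (Multiset.mem_cons_self a S)
    have hpos : 0 < d ^ Multiset.card S := pow_pos hd _
    rw [Multiset.prod_cons, Multiset.card_cons, pow_succ]
    nlinarith

private lemma multiset_prod_gt_s6 {d : ℝ} (hd : 0 < d) (S : Multiset ℝ)
    (hS : 0 < Multiset.card S) (h : ∀ r ∈ S, d < r) :
    d ^ Multiset.card S < S.prod := by
  obtain ⟨a, ha⟩ := Multiset.card_pos_iff_exists_mem.mp hS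
  obtain ⟨T, rfl⟩ := Multiset.exists_cons_of_mem ha
  have hT := multiset_prod_ge hd T (fun r hr => h r (Multiset.mem_cons_of_mem hr))
  have ha' : d < a := h a (Multiset.mem_cons_self a T)
  have hpos : 0 < d ^ Multiset.card T := pow_pos hd _
  rw [Multiset.prod_cons, Multiset.card_cons, pow_succ, mul_comm]
  nlinarith

private lemma key_bound (f g : ℤ[X]) (d : ℤ) (hd : 0 < d)
    (hg : g ∣ f) (hdeg : 1 ≤ g.natDegree)
    (hroots : ∀ z : ℂ, aeval z f = 0 → (d : ℝ) < ‖z‖) :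
    |g.leadingCoeff| * d < |g.coeff 0| := by
  have hg0 : g ≠ 0 := fun h => by simp [h] at hdeg
  have hinj : Function.Injective (Int.castRingHom ℂ) := Int.cast_injective
  set P : ℂ[X] := g.map (Int.castRingHom ℂ) with hP
  have hPne : P ≠ 0 := (Polynomial.map_ne_zero_iff hinj).mpr hg0
  have hsplit : P.Splits := IsAlgClosed.splits P
  have hcard : Multiset.card P.roots = g.natDegree := by
    rw [splits_iff_card_roots.mp hsplit, hP, natDegree_map_eq_of_injective hinj]
  have hre : ∀ r ∈ P.roots, (d:ℝ) < ‖r‖ := by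
    intro r hr
    apply hroots
    obtain ⟨c, rfl⟩ := hg
    have hgr : aeval r g = 0 := by
      have h1 := (mem_roots hPne).mp hr
      rw [IsRoot, hP, eval_map] at h1
      rw [aeval_def]
      exact h1
    simp [hgr]
  have heq := hsplit.eq_prod_roots
  have heval : P.eval 0 = P.leadingCoeff * (P.roots.map (fun r => -r)).prod := by
    conv_lhs => rw [heq]
    simp [eval_multiset_prod, Multiset.map_map, Function.comp]
  have habs : (|g.coeff 0| : ℝ) = (|g.leadingCoeff| : ℝ) * ((P.roots.map (fun z : ℂ => ‖z‖)).prod) := by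
    have h1 : ‖P.eval 0‖ = (|g.coeff 0| : ℝ) := by
      rw [← coeff_zero_eq_eval_zero, hP, coeff_map]
      simp [Complex.norm_intCast]
    have h2 : ‖P.leadingCoeff‖ = (|g.leadingCoeff| : ℝ) := by
      rw [hP, Polynomial.leadingCoeff_map_of_injective hinj]
      simp [Complex.norm_intCast]
    rw [← h1, heval, norm_mul, h2]
    congr 1
    have := map_multiset_prod (normHom : ℂ →*₀ ℝ) (P.roots.map (fun r => -r))
    simpa [Multiset.map_map, Function.comp] using this
  have hprod : (d:ℝ) ^ g.natDegree < (P.roots.map (fun z : ℂ => ‖z‖)).prod := by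
    have := multiset_prod_gt_s6 (by exact_mod_cast hd : (0:ℝ) < (d:ℝ))
      (P.roots.map (fun z : ℂ => ‖z‖)) (by rw [Multiset.card_map, hcard]; omega)
      (by intro r hr; obtain ⟨z, hz, rfl⟩ := Multiset.mem_map.mp hr; exact hre z hz)
    rwa [Multiset.card_map, hcard] at this
  have h1le : (1:ℝ) ≤ (d:ℝ) := by exact_mod_cast hd
  have hdpow : (d:ℝ) ≤ (d:ℝ) ^ g.natDegree := le_self_pow₀ h1le (by omega)
  have hlcpos : (0:ℝ) < (|g.leadingCoeff| : ℝ) := by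
    exact_mod_cast abs_pos.mpr (leadingCoeff_ne_zero.mpr hg0)
  have final : (|g.leadingCoeff| : ℝ) * (d:ℝ) < (|g.coeff 0| : ℝ) := by
    rw [habs]; nlinarith
  exact_mod_cast final

set_option maxHeartbeats 1000000 in
/-- Theorem 3: factorization into at most `min k j` irreducibles via the
prime factorization of the leading coefficient and root location. -/
theorem stmt6 (m : ℕ) (a : ℕ → ℤ) (f : ℤ[X])
    (hf : f = ∑ i ∈ range (m + 1), C (a i) * X ^ i)
    (ha0 : a 0 ≠ 0) (hm : 1 ≤ m)
    (hprim : f.IsPrimitive)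
    (p : ℕ) (hp : p.Prime) (k : ℕ) (hk : 1 ≤ k) (d : ℤ) (hd : 0 < d)
    (hpd : ¬ (p : ℤ) ∣ d)
    (ε : ℤ) (hε : ε = 1 ∨ ε = -1)
    (ham : a m = ε * (p : ℤ) ^ k * d)
    (hroots : ∀ z : ℂ, aeval z f = 0 → (d : ℝ) < ‖z‖)
    (j : ℕ) (hj1 : 1 ≤ j) (hjm : j ≤ m) (hndvd : ¬ (p : ℤ) ∣ a (m - j))
    (q : ℕ) (hq : q.Prime) (hqdvd : (q : ℤ) ∣ a 0)
    (hqmin : ∀ q' : ℕ, q'.Prime → (q' : ℤ) ∣ a 0 → q ≤ q')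
    (hsmall : |a 0 / (q : ℤ)| ≤ |a m|) :
    ∃ n : ℕ, n ≤ min k j ∧ ∃ g : Fin n → ℤ[X],
      (∀ i, Irreducible (g i)) ∧ f = ∏ i, g i := by
  have hpZ : Prime (p : ℤ) := Nat.prime_iff_prime_int.mp hp
  have ham0 : a m ≠ 0 := by
    rw [ham]
    rcases hε with rfl | rfl <;> simp [pow_ne_zero, hp.ne_zero, hd.ne']
  -- coefficients of f
  have hcm : ∀ i, f.coeff i = if i ≤ m then a i else 0 := by
    intro i
    rw [hf, finset_sum_coeff]
    simp only [coeff_C_mul, coeff_X_pow, mul_ite, mul_one, mul_zero]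
    rw [Finset.sum_ite_eq (range (m+1)) i a]
    simp [Nat.lt_succ_iff]
  have hfd : f.natDegree = m := by
    apply le_antisymm
    · exact natDegree_le_iff_coeff_eq_zero.mpr (fun N hN => by rw [hcm]; simp [Nat.not_le.mpr hN])
    · exact le_natDegree_of_ne_zero (by rw [hcm]; simpa using ham0)
  have hf0 : f ≠ 0 := fun h => ham0 (by have := hcm m; simp [h] at this; exact this.symm)
  have hlc : f.leadingCoeff = a m := by
    rw [leadingCoeff, hfd, hcm]; simp
  have habsam : |a m| = (p:ℤ)^k * d := by
    have hpk0 : (0:ℤ) < (p:ℤ)^k := pow_pos (by exact_mod_cast hp.pos) k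
    rw [ham]
    rcases hε with rfl | rfl
    · rw [one_mul, abs_of_pos (by positivity)]
    · rw [show (-1 : ℤ) * (p:ℤ)^k * d = -((p:ℤ)^k * d) by ring, abs_neg,
        abs_of_pos (by positivity)]
  -- the key counting step, for any factorization into irreducibles
  have main : ∀ (n : ℕ) (g : Fin n → ℤ[X]), (∀ i, Irreducible (g i)) → f = ∏ i, g i →
      n ≤ min k j := by
    intro n g hirr hfg
    have hgne : ∀ i, g i ≠ 0 := fun i => (hirr i).ne_zero
    have hgdeg : ∀ i, 1 ≤ (g i).natDegree := by
      intro i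
      by_contra hcon
      push_neg at hcon
      have h0 : (g i).natDegree = 0 := by omega
      have hC : g i = C ((g i).coeff 0) := eq_C_of_natDegree_eq_zero h0
      have hdvd : C ((g i).coeff 0) ∣ f := by
        rw [hfg, ← hC]; exact Finset.dvd_prod_of_mem g (mem_univ i)
      have := hprim _ hdvd
      exact (hirr i).not_isUnit (by rw [hC]; exact (isUnit_C).mpr this)
    have hdegsum : ∑ i, (g i).natDegree = m := by
      rw [← hfd, hfg, natDegree_prod _ _ (fun i _ => hgne i)]
    have hnm : n ≤ m := by
      calc n = ∑ _i : Fin n, 1 := by simp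
        _ ≤ ∑ i, (g i).natDegree := Finset.sum_le_sum (fun i _ => hgdeg i)
        _ = m := hdegsum
    rcases Nat.lt_or_ge n 2 with hn2 | hn2
    · omega
    -- Claim: p divides every leading coefficient
    have claimP : ∀ i, (p:ℤ) ∣ (g i).leadingCoeff := by
      intro i
      by_contra hpg
      set h : ℤ[X] := ∏ i' ∈ univ.erase i, g i' with hh
      have hfgh : f = g i * h := by
        rw [hfg, hh, Finset.mul_prod_erase univ g (mem_univ i)]
      have hh0 : h ≠ 0 := Finset.prod_ne_zero_iff.mpr (fun i' _ => hgne i')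
      have hlcm : (g i).leadingCoeff * h.leadingCoeff = a m := by
        rw [← hlc, hfgh, leadingCoeff_mul]
      have hpk : (p:ℤ)^k ∣ h.leadingCoeff := by
        have hcop : IsCoprime ((p:ℤ)^k) ((g i).leadingCoeff) :=
          ((hpZ.coprime_iff_not_dvd).mpr hpg).pow_left
        apply hcop.dvd_of_dvd_mul_left
        rw [hlcm, ham]
        exact ⟨ε * d, by ring⟩
      have hdegh : 1 ≤ h.natDegree := by
        obtain ⟨i', hi'⟩ : ∃ i' : Fin n, i' ≠ i :=
          Fintype.exists_ne_of_one_lt_card (by simp; omega) i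
        have : (g i').natDegree ≤ h.natDegree := by
          rw [hh, natDegree_prod _ _ (fun i'' _ => hgne i'')]
          exact Finset.single_le_sum (f := fun i'' => (g i'').natDegree) (fun i'' _ => Nat.zero_le _)
            (Finset.mem_erase.mpr ⟨hi', mem_univ i'⟩)
        have := hgdeg i'
        omega
      have hb1 := key_bound f (g i) d hd ⟨h, hfgh⟩ (hgdeg i) hroots
      have hb2 := key_bound f h d hd ⟨g i, by rw [hfgh]; ring⟩ hdegh hroots
      have hc0 : (g i).coeff 0 * h.coeff 0 = a 0 := by
        have h1 : f.coeff 0 = a 0 := by rw [hcm]; simp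
        rw [← h1, coeff_zero_eq_eval_zero, coeff_zero_eq_eval_zero, coeff_zero_eq_eval_zero,
          hfgh, eval_mul]
      -- |g i coeff 0| ≥ q
      have hgi0 : 2 ≤ |(g i).coeff 0| := by
        have h1 : 1 ≤ |(g i).leadingCoeff| :=
          Int.one_le_abs (leadingCoeff_ne_zero.mpr (hgne i))
        nlinarith
    -- -> q ≤ |(g i).coeff 0|
      have hq_le : (q:ℤ) ≤ |(g i).coeff 0| := by
        set c := ((g i).coeff 0).natAbs with hc
        have hc2 : 2 ≤ c := by
          rw [hc]; rw [Int.abs_eq_natAbs] at hgi0; exact_mod_cast hgi0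
        have hmf : c.minFac.Prime := Nat.minFac_prime (by omega)
        have hdvd1 : (c.minFac : ℤ) ∣ (g i).coeff 0 := by
          have : (c.minFac : ℤ) ∣ (c : ℤ) := Int.natCast_dvd_natCast.mpr (Nat.minFac_dvd c)
          rwa [hc, Int.natCast_natAbs, dvd_abs] at this
        have hdvd2 : (c.minFac : ℤ) ∣ a 0 := hdvd1.trans ⟨h.coeff 0, hc0.symm⟩
        have hqm := hqmin c.minFac hmf hdvd2
        have hle : c.minFac ≤ c := Nat.minFac_le (by omega)
        rw [Int.abs_eq_natAbs, ← hc]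
        exact_mod_cast hqm.trans hle
      -- |h coeff 0| > p^k * d
      have hhlc : (p:ℤ)^k ≤ |h.leadingCoeff| := by
        apply Int.le_of_dvd (abs_pos.mpr (leadingCoeff_ne_zero.mpr hh0))
        exact (dvd_abs _ _).mpr hpk
      have hh0big : (p:ℤ)^k * d < |h.coeff 0| := by
        have hpk0 : (0:ℤ) < (p:ℤ)^k := pow_pos (by exact_mod_cast hp.pos) k
        nlinarith
      -- |a 0| ≤ q * p^k * d
      have ha0le : |a 0| ≤ (q:ℤ) * ((p:ℤ)^k * d) := by
        obtain ⟨c, hc⟩ := hqdvd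
        have hq0 : (q:ℤ) ≠ 0 := by exact_mod_cast hq.ne_zero
        have hdiv : a 0 / (q:ℤ) = c := by rw [hc]; exact Int.mul_ediv_cancel_left c hq0
        rw [hdiv] at hsmall
        calc |a 0| = (q:ℤ) * |c| := by
              rw [hc, abs_mul, abs_of_pos (by exact_mod_cast hq.pos : (0:ℤ) < (q:ℤ))]
          _ ≤ (q:ℤ) * |a m| := by
              apply mul_le_mul_of_nonneg_left hsmall (by positivity)
          _ = (q:ℤ) * ((p:ℤ)^k * d) := by rw [habsam]
      -- contradiction
      have hq0' : (0:ℤ) < (q:ℤ) := by exact_mod_cast hq.pos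
      have hbig : (q:ℤ) * ((p:ℤ)^k * d) < |a 0| := by
        have : |a 0| = |(g i).coeff 0| * |h.coeff 0| := by rw [← hc0, abs_mul]
        rw [this]
        have hpk0 : (0:ℤ) < (p:ℤ)^k := pow_pos (by exact_mod_cast hp.pos) k
        have h2 : 0 < |h.coeff 0| := by nlinarith
        calc (q:ℤ) * ((p:ℤ)^k * d) < (q:ℤ) * |h.coeff 0| := by
              apply mul_lt_mul_of_pos_left hh0big hq0'
          _ ≤ |(g i).coeff 0| * |h.coeff 0| := by
              apply mul_le_mul_of_nonneg_right hq_le (le_of_lt h2)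
      omega
    -- n ≤ k
    have hnk : n ≤ k := by
      by_contra hcon
      push_neg at hcon
      have hdvd : (p:ℤ)^n ∣ a m := by
        rw [← hlc, hfg, leadingCoeff_prod]
        have h1 : (p:ℤ)^n = ∏ _i : Fin n, (p:ℤ) := by simp
        rw [h1]
        exact Finset.prod_dvd_prod_of_dvd _ _ (fun i _ => claimP i)
      have h2 : (p:ℤ)^(k+1) ∣ a m := (pow_dvd_pow _ (by omega)).trans hdvd
      rw [ham] at h2
      have h3 : (p:ℤ)^(k+1) ∣ (p:ℤ)^k * d := by
        rcases hε with rfl | rfl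
        · simpa using h2
        · rw [show (-1 : ℤ) * (p:ℤ)^k * d = -((p:ℤ)^k * d) by ring, dvd_neg] at h2
          exact h2
      rw [pow_succ] at h3
      have hpk0 : ((p:ℤ))^k ≠ 0 := pow_ne_zero _ (by exact_mod_cast hp.ne_zero)
      exact hpd ((mul_dvd_mul_iff_left hpk0).mp h3)
    -- n ≤ j
    have hnj : n ≤ j := by
      haveI : Fact p.Prime := ⟨hp⟩
      set φ := Int.castRingHom (ZMod p) with hφ
      set F := f.map φ with hF
      have hFc : F.coeff (m - j) ≠ 0 := by
        rw [hF, coeff_map, hcm]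
        simp only [Nat.sub_le, if_true]
        simpa [hφ, ZMod.intCast_zmod_eq_zero_iff_dvd] using hndvd
      have hFdeg : m - j ≤ F.natDegree := le_natDegree_of_ne_zero hFc
      have hFprod : F = ∏ i, (g i).map φ := by rw [hF, hfg, Polynomial.map_prod]
      have hmapne : ∀ i, (g i).map φ ≠ 0 := by
        intro i h0
        apply hFc
        rw [hFprod, Finset.prod_eq_zero (mem_univ i) h0]
        simp
      have hmapdeg : ∀ i, ((g i).map φ).natDegree ≤ (g i).natDegree - 1 := by
        intro i
        have h1 : ((g i).map φ).natDegree ≤ (g i).natDegree := natDegree_map_le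
        have h2 : ((g i).map φ).coeff ((g i).natDegree) = 0 := by
          rw [coeff_map, ← leadingCoeff]
          simpa [hφ, ZMod.intCast_zmod_eq_zero_iff_dvd] using claimP i
        by_contra hcon
        push_neg at hcon
        have hgi := hgdeg i
        have heqd : ((g i).map φ).natDegree = (g i).natDegree := by omega
        have h3 := leadingCoeff_ne_zero.mpr (hmapne i)
        rw [leadingCoeff, heqd] at h3
        exact h3 h2
      have hFdeg2 : F.natDegree = ∑ i, ((g i).map φ).natDegree := by
        rw [hFprod]
        exact natDegree_prod _ _ (fun i _ => hmapne i)
      have hsum : ∑ i, ((g i).map φ).natDegree ≤ m - n := by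
        calc ∑ i, ((g i).map φ).natDegree ≤ ∑ i, ((g i).natDegree - 1) :=
              Finset.sum_le_sum (fun i _ => hmapdeg i)
          _ = (∑ i, (g i).natDegree) - ∑ _i : Fin n, 1 :=
              (Finset.sum_tsub_distrib univ (f := fun i => (g i).natDegree) (g := fun _ => 1) (fun i _ => hgdeg i))
          _ = m - n := by rw [hdegsum]; simp
      have : m - j ≤ m - n := by omega
      omega
    omega
  -- now produce the factorization
  obtain ⟨u, hu⟩ := (UniqueFactorizationMonoid.factors_prod hf0)
  set S := UniqueFactorizationMonoid.factors f with hS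
  have hirrS : ∀ x ∈ S, Irreducible x := fun x hx =>
    UniqueFactorizationMonoid.irreducible_of_factor x hx
  set L := S.toList with hL
  have hLprod : L.prod = S.prod := Multiset.prod_toList S
  have hmemL : ∀ x ∈ L, Irreducible x := fun x hx => hirrS x (by rwa [← Multiset.mem_toList])
  cases hLc : L with
  | nil =>
    exfalso
    rw [hLc] at hLprod
    simp at hLprod
    rw [← hLprod, one_mul] at hu
    have h1 : IsUnit f := by rw [← hu]; exact u.isUnit
    have := Polynomial.natDegree_eq_zero_of_isUnit h1
    omega
  | cons x xs =>
    have hirr : ∀ i : Fin (((↑u * x) :: xs).length), Irreducible (((↑u * x) :: xs).get i) := by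
      intro i
      have hlen : ((↑u * x) :: xs).get i ∈ (↑u * x) :: xs := List.get_mem _ _
      rcases List.mem_cons.mp hlen with h | h
      · rw [h]
        have hx : Irreducible x := hmemL x (by rw [hLc]; exact List.mem_cons_self)
        exact (Associated.irreducible ⟨u, mul_comm x ↑u⟩ hx)
      · exact hmemL _ (by rw [hLc]; exact List.mem_cons_of_mem x h)
    have hprodf : f = ∏ i : Fin (((↑u * x) :: xs).length), ((↑u * x) :: xs).get i := by
      rw [← List.prod_ofFn, List.ofFn_get, List.prod_cons]
      rw [← hu, ← hLprod, hLc, List.prod_cons]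
      ring
    exact ⟨_, main _ _ hirr hprodf, _, hirr, hprodf⟩
end

section
/- Let f = a_0 + a_1 z + ... + a_m z^m ∈ ℤ[z] be primitive with a_m = ± p d for a prime p and positive integer d with p not dividing d, such that every complex zero of f satisfies |z| > d, and |a_0/q| ≤ |a_m| where q is the smallest prime divisor of a_0. Then f is irreducible in ℤ[z]. -/
open Polynomial Finset


lemma prod_lt_aux {d : ℝ} (hd : 0 < d) :
    ∀ s : Multiset ℝ, (∀ x ∈ s, d ≤ x) → d ^ Multiset.card s ≤ s.prod := by
  intro s
  induction s using Multiset.induction with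
  | empty => simp
  | cons a t ih =>
    intro h
    simp only [Multiset.card_cons, Multiset.prod_cons, pow_succ']
    have ha : d ≤ a := h a (Multiset.mem_cons_self a t)
    have ht := ih (fun x hx => h x (Multiset.mem_cons_of_mem hx))
    have : (0:ℝ) ≤ d ^ Multiset.card t := le_of_lt (pow_pos hd _)
    nlinarith

lemma prod_lt {d : ℝ} (hd : 0 < d) (s : Multiset ℝ) (h : ∀ x ∈ s, d < x)
    (hs : s ≠ 0) : d ^ Multiset.card s < s.prod := by
  obtain ⟨a, ha⟩ := Multiset.exists_mem_of_ne_zero hs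
  obtain ⟨t, rfl⟩ := Multiset.exists_cons_of_mem ha
  simp only [Multiset.card_cons, Multiset.prod_cons, pow_succ']
  have ha' : d < a := h a (Multiset.mem_cons_self a t)
  have ht := prod_lt_aux hd t (fun x hx => le_of_lt (h x (Multiset.mem_cons_of_mem hx)))
  have : (0:ℝ) < d ^ Multiset.card t := pow_pos hd _
  nlinarith

lemma keyB (g : ℤ[X]) (hg1 : 1 ≤ g.natDegree) (d : ℤ) (hd : 0 < d)
    (hroots : ∀ z : ℂ, aeval z g = 0 → (d : ℝ) < ‖z‖) :
    |g.leadingCoeff| * d ^ g.natDegree < |g.coeff 0| := by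
  have hg0 : g ≠ 0 := fun h => by simp [h] at hg1
  set G : ℂ[X] := g.map (Int.castRingHom ℂ) with hG
  have hinj : Function.Injective (Int.castRingHom ℂ) := Int.cast_injective
  have hG0 : G ≠ 0 := (Polynomial.map_ne_zero_iff hinj).mpr hg0
  have hGdeg : G.natDegree = g.natDegree := natDegree_map_eq_of_injective hinj g
  have hsplit : G.Splits := IsAlgClosed.splits G
  have hcard : Multiset.card G.roots = G.natDegree :=
    (splits_iff_card_roots.mp hsplit)
  have heq := hsplit.eq_prod_roots
  -- evaluate at 0
  have heval : G.eval 0 = G.leadingCoeff * (G.roots.map fun r => -r).prod := by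
    conv_lhs => rw [heq]
    simp [eval_multiset_prod, Multiset.map_map]
  have habs : ‖G.eval 0‖
      = ‖G.leadingCoeff‖ * ((G.roots.map fun r => ‖r‖).prod) := by
    rw [heval, norm_mul, show ‖(G.roots.map fun r => -r).prod‖ = normHom (G.roots.map fun r => -r).prod from rfl, map_multiset_prod, Multiset.map_map]
    refine congrArg _ (congrArg Multiset.prod (Multiset.map_congr rfl ?_))
    intro x _
    exact norm_neg x
  have hroots' : ∀ x ∈ G.roots.map fun r => ‖r‖, (d:ℝ) < x := by
    intro x hx
    obtain ⟨r, hr, rfl⟩ := Multiset.mem_map.mp hx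
    have : aeval r g = 0 := by
      have h2 := isRoot_of_mem_roots hr
      rw [IsRoot, hG] at h2
      rw [aeval_def, eval₂_eq_eval_map, algebraMap_int_eq]
      exact h2
    exact hroots r this
  have hne : G.roots ≠ 0 := by
    intro h
    rw [h] at hcard
    simp [hGdeg] at hcard
    omega
  have hprod : (d:ℝ) ^ g.natDegree < (G.roots.map fun r => ‖r‖).prod := by
    have := prod_lt (by exact_mod_cast hd) _ hroots' (by simpa using hne)
    simpa [hcard, hGdeg] using this
  have hlc : ‖G.leadingCoeff‖ = |(g.leadingCoeff : ℝ)| := by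
    rw [hG, leadingCoeff_map_of_injective hinj]
    simp [Complex.norm_intCast]
  have hc0 : ‖G.eval 0‖ = |(g.coeff 0 : ℝ)| := by
    have : G.eval 0 = ((g.coeff 0 : ℤ) : ℂ) := by
      rw [← coeff_zero_eq_eval_zero, hG, coeff_map]
      rfl
    rw [this, Complex.norm_intCast]
  have hlcpos : (0:ℝ) < |(g.leadingCoeff : ℝ)| := by
    simp [abs_pos, leadingCoeff_ne_zero, hg0]
  have final : |(g.leadingCoeff : ℝ)| * (d:ℝ) ^ g.natDegree < |(g.coeff 0 : ℝ)| := by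
    rw [← hc0, habs, hlc]
    exact (mul_lt_mul_iff_right₀ hlcpos).mpr hprod |>.trans_le (le_refl _)
  exact_mod_cast final

lemma core (f g h : ℤ[X]) (hfgh : f = g * h)
    (hg1 : 1 ≤ g.natDegree) (hh1 : 1 ≤ h.natDegree)
    (p : ℕ) (hp : p.Prime) (d : ℤ) (hd : 0 < d)
    (hpg : (p : ℤ) ∣ g.leadingCoeff)
    (ha0 : f.coeff 0 ≠ 0)
    (hroots : ∀ z : ℂ, aeval z f = 0 → (d : ℝ) < ‖z‖)
    (q : ℕ) (hq : q.Prime)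
    (hqmin : ∀ q' : ℕ, q'.Prime → (q' : ℤ) ∣ f.coeff 0 → q ≤ q')
    (hsmall : |f.coeff 0| ≤ (q : ℤ) * ((p : ℤ) * d)) : False := by
  have hg0 : g ≠ 0 := fun hk => by simp [hk] at hg1
  have hh0 : h ≠ 0 := fun hk => by simp [hk] at hh1
  have hBC : f.coeff 0 = g.coeff 0 * h.coeff 0 := by rw [hfgh, mul_coeff_zero]
  have hB0 : g.coeff 0 ≠ 0 := fun hk => ha0 (by simp [hBC, hk])
  have hC0 : h.coeff 0 ≠ 0 := fun hk => ha0 (by simp [hBC, hk])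
  have hrg : ∀ z : ℂ, aeval z g = 0 → (d : ℝ) < ‖z‖ := by
    intro z hz; exact hroots z (by rw [hfgh, map_mul, hz, zero_mul])
  have hrh : ∀ z : ℂ, aeval z h = 0 → (d : ℝ) < ‖z‖ := by
    intro z hz; exact hroots z (by rw [hfgh, map_mul, hz, mul_zero])
  have hkg := keyB g hg1 d hd hrg
  have hkh := keyB h hh1 d hd hrh
  -- |g.leadingCoeff| ≥ p
  have hglc0 : g.leadingCoeff ≠ 0 := leadingCoeff_ne_zero.mpr hg0
  have hp2 : (2 : ℤ) ≤ (p : ℤ) := by exact_mod_cast hp.two_le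
  have hq2 : (2 : ℤ) ≤ (q : ℤ) := by exact_mod_cast hq.two_le
  have hglcp : (p : ℤ) ≤ |g.leadingCoeff| := by
    obtain ⟨t, ht⟩ := hpg
    have ht0 : t ≠ 0 := fun hk => hglc0 (by simp [ht, hk])
    have : 1 ≤ |t| := Int.one_le_abs (by omega)
    rw [ht, abs_mul]
    have : (p:ℤ) * 1 ≤ (p:ℤ) * |t| := by
      apply mul_le_mul_of_nonneg_left this (by omega)
    simpa using this
  have hdpow : ∀ n : ℕ, 1 ≤ n → d ≤ d ^ n := fun n hn =>
    le_self_pow₀ (by omega) (by omega)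
  -- |g.coeff 0| ≥ p*d + 1
  have hBbig : (p : ℤ) * d + 1 ≤ |g.coeff 0| := by
    have h1 : (p : ℤ) * d ≤ |g.leadingCoeff| * d ^ g.natDegree := by
      apply mul_le_mul hglcp (hdpow _ hg1) (by omega) (abs_nonneg _)
    omega
  -- |h.coeff 0| ≥ 2
  have hhlc : 1 ≤ |h.leadingCoeff| := Int.one_le_abs (leadingCoeff_ne_zero.mpr hh0)
  have hC2 : 2 ≤ |h.coeff 0| := by
    have h1 : d ≤ |h.leadingCoeff| * d ^ h.natDegree := by
      have := mul_le_mul hhlc (hdpow _ hh1) (by omega) (abs_nonneg _)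
      simpa using this
    omega
  -- hence q ≤ |h.coeff 0|
  have hCq : (q : ℤ) ≤ |h.coeff 0| := by
    obtain ⟨r, hrp, hrd⟩ := Int.exists_prime_and_dvd
      (show (h.coeff 0).natAbs ≠ 1 by
        rw [Int.abs_eq_natAbs] at hC2
        omega)
    have hrn : r.natAbs.Prime := Int.prime_iff_natAbs_prime.mp hrp
    have hrd' : (r.natAbs : ℤ) ∣ h.coeff 0 := (Int.natAbs_dvd).mpr hrd
    have hqle : q ≤ r.natAbs := hqmin r.natAbs hrn (hrd'.trans ⟨g.coeff 0, by rw [hBC]; ring⟩)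
    have : (r.natAbs : ℤ) ≤ |h.coeff 0| :=
      Int.le_of_dvd (abs_pos.mpr hC0) ((dvd_abs _ _).mpr hrd')
    exact le_trans (by exact_mod_cast hqle) this
  -- contradiction
  have : |f.coeff 0| = |g.coeff 0| * |h.coeff 0| := by rw [hBC, abs_mul]
  nlinarith [mul_le_mul hBbig hCq (by omega) (by positivity : (0:ℤ) ≤ |g.coeff 0|)]

/-- Case `k = 1` of Theorem 3: irreducibility criterion. -/
theorem stmt7 (m : ℕ) (a : ℕ → ℤ) (f : ℤ[X])
    (hf : f = ∑ i ∈ range (m + 1), C (a i) * X ^ i)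
    (ha0 : a 0 ≠ 0) (hm : 1 ≤ m)
    (hprim : f.IsPrimitive)
    (p : ℕ) (hp : p.Prime) (d : ℤ) (hd : 0 < d)
    (hpd : ¬ (p : ℤ) ∣ d)
    (ε : ℤ) (hε : ε = 1 ∨ ε = -1)
    (ham : a m = ε * (p : ℤ) * d)
    (hroots : ∀ z : ℂ, aeval z f = 0 → (d : ℝ) < ‖z‖)
    (q : ℕ) (hq : q.Prime) (hqdvd : (q : ℤ) ∣ a 0)
    (hqmin : ∀ q' : ℕ, q'.Prime → (q' : ℤ) ∣ a 0 → q ≤ q')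
    (hsmall : |a 0 / (q : ℤ)| ≤ |a m|) :
    Irreducible f := by
  have hp0 : (0:ℤ) < (p:ℤ) := by exact_mod_cast hp.pos
  have hq0 : (0:ℤ) < (q:ℤ) := by exact_mod_cast hq.pos
  have hcoeff : ∀ k, k ≤ m → f.coeff k = a k := by
    intro k hk
    rw [hf, finset_sum_coeff]
    simp only [coeff_C_mul, coeff_X_pow, mul_ite, mul_one, mul_zero]
    rw [Finset.sum_ite_eq (range (m+1)) k a]
    simp [Nat.lt_succ_of_le hk]
  have ham0 : a m ≠ 0 := by
    rw [ham]
    rcases hε with h | h <;> subst h <;> intro hc <;>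
      · simp at hc
        rcases hc with hc | hc
        · exact hp.ne_zero (by exact_mod_cast hc)
        · omega
  have habsm : |a m| = (p : ℤ) * d := by
    rw [ham, abs_mul, abs_mul]
    rcases hε with h | h <;> subst h <;>
      simp [abs_of_pos hd, abs_of_pos hp0]
  have hdegle : f.natDegree ≤ m := by
    rw [hf]
    apply natDegree_sum_le_of_forall_le
    intro i hi
    apply le_trans (natDegree_C_mul_le _ _)
    rw [natDegree_X_pow]
    exact Nat.lt_succ_iff.mp (mem_range.mp hi)
  have hdeg : f.natDegree = m := by
    have h1 : m ≤ f.natDegree := le_natDegree_of_ne_zero (by rw [hcoeff m le_rfl]; exact ham0)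
    omega
  have hlc : f.leadingCoeff = a m := by rw [leadingCoeff, hdeg, hcoeff m le_rfl]
  have hc0 : f.coeff 0 = a 0 := hcoeff 0 (by omega)
  -- |a 0| ≤ q * (p * d)
  have hsmall' : |f.coeff 0| ≤ (q : ℤ) * ((p:ℤ) * d) := by
    obtain ⟨s, hs⟩ := hqdvd
    have hdiv : a 0 / (q : ℤ) = s := by
      rw [hs]; exact Int.mul_ediv_cancel_left s (by omega)
    rw [hc0, hs, abs_mul, abs_of_pos hq0]
    rw [hdiv, habsm] at hsmall
    exact mul_le_mul_of_nonneg_left hsmall (by omega)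
  have hqmin' : ∀ q' : ℕ, q'.Prime → (q' : ℤ) ∣ f.coeff 0 → q ≤ q' := by
    intro q' h1 h2; exact hqmin q' h1 (hc0 ▸ h2)
  have ha0' : f.coeff 0 ≠ 0 := hc0 ▸ ha0
  constructor
  · exact not_isUnit_of_natDegree_pos f (by omega)
  · intro g h hfgh
    by_contra hcon
    push_neg at hcon
    obtain ⟨hgu, hhu⟩ := hcon
    have hdegpos : ∀ u v : ℤ[X], f = u * v → ¬ IsUnit u → 1 ≤ u.natDegree := by
      intro u v huv hu
      rcases Nat.eq_zero_or_pos u.natDegree with hud | hud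
      · exfalso
        have hcu : u = C (u.coeff 0) := eq_C_of_natDegree_eq_zero hud
        have hdvd : C (u.coeff 0) ∣ f := ⟨v, by rw [← hcu, huv]⟩
        exact hu (hcu ▸ isUnit_C.mpr (hprim _ hdvd))
      · exact hud
    have hg1 : 1 ≤ g.natDegree := hdegpos g h hfgh hgu
    have hh1 : 1 ≤ h.natDegree := hdegpos h g (by rw [hfgh, mul_comm]) hhu
    have hpdvd : (p : ℤ) ∣ g.leadingCoeff * h.leadingCoeff := by
      rw [← leadingCoeff_mul, ← hfgh, hlc, ham]
      exact ⟨ε * d, by ring⟩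
    have hpint : Prime ((p : ℕ) : ℤ) := Nat.prime_iff_prime_int.mp hp
    rcases hpint.dvd_mul.mp hpdvd with hpg | hph
    · exact absurd (core f g h hfgh hg1 hh1 p hp d hd hpg ha0' hroots q hq hqmin' hsmall') not_false
    · exact absurd (core f h g (by rw [hfgh, mul_comm]) hh1 hg1 p hp d hd hph ha0' hroots q hq hqmin' hsmall') not_false
end
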